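/- arXiv:1405.5580 — 8 statements merged into one kernel-verified Lean document; each statement's English description precedes it below -/
import Mathlib

section
/- Let c > 0, d ∈ ℝ, and let p, b : (0,1) → ℝ be bounded measurable functions with p(u) → 0 and b(u) → 0 as u → 0⁺ and 1 + p(u) > 0 for all u ∈ (0,1). Define s(u) = c(1+p(u))·exp(∫_u^1 b(t)/t dt) and Q(u) = d − s(u) + ∫_u^1 s(t)/t dt for u ∈ (0,1). Then for every x > 0: lim_{u→0⁺} (Q(xu) − Q(u)) / s(u) = −log x (the quotient being taken for u small enough that xu ∈ (0,1)). -/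
open Filter Topology Set MeasureTheory intervalIntegral

lemma aux_integrable_div (f : ℝ → ℝ) (hf : Measurable f) (M : ℝ) (hM : ∀ t, |f t| ≤ M)
    {v w : ℝ} (hv : 0 < v) (hw : 0 < w) :
    IntervalIntegrable (fun t => f t / t) volume v w := by
  have hm : 0 < min v w := lt_min hv hw
  rw [intervalIntegrable_iff]
  have : IsFiniteMeasure (volume.restrict (Set.uIoc v w)) := by
    constructor
    rw [Measure.restrict_apply_univ]
    exact measure_Ioc_lt_top
  apply MeasureTheory.Integrable.mono' (g := fun _ => M / min v w)
    (integrable_const _)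
  · exact ((hf.div measurable_id).aestronglyMeasurable).restrict
  · filter_upwards [MeasureTheory.ae_restrict_mem measurableSet_uIoc] with t ht
    have ht0 : min v w < t := ht.1
    have hMnn : 0 ≤ M := le_trans (abs_nonneg _) (hM 0)
    rw [Real.norm_eq_abs, abs_div, abs_of_pos (hm.trans ht0)]
    apply div_le_div₀ hMnn (hM t) hm ht0.le

lemma aux_bound_int (f : ℝ → ℝ) {v w : ℝ}
    (hint : IntervalIntegrable (fun τ => f τ / τ) volume v w)
    (K : ℝ) (hv : 0 < v) (hvw : v ≤ w)
    (hK : ∀ τ ∈ Icc v w, |f τ| ≤ K) :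
    |∫ τ in v..w, f τ / τ| ≤ K * (Real.log w - Real.log v) := by
  have hw : 0 < w := lt_of_lt_of_le hv hvw
  have h1 : |∫ τ in v..w, f τ / τ| ≤ |∫ τ in v..w, abs (f τ / τ)| := by
    have := intervalIntegral.norm_integral_le_abs_integral_norm (a := v) (b := w)
        (f := fun τ => f τ / τ) (μ := volume)
    simpa [Real.norm_eq_abs, abs_div] using this
  have hintabs : IntervalIntegrable (fun τ => abs (f τ / τ)) volume v w := hint.abs
  have hint2 : IntervalIntegrable (fun τ => K / τ) volume v w := by
    apply ContinuousOn.intervalIntegrable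
    apply ContinuousOn.div continuousOn_const continuousOn_id
    intro τ hτ
    rw [uIcc_of_le hvw] at hτ
    exact ne_of_gt (lt_of_lt_of_le hv hτ.1)
  have h2 : (∫ τ in v..w, abs (f τ / τ)) ≤ ∫ τ in v..w, K / τ := by
    apply intervalIntegral.integral_mono_on hvw hintabs hint2
    intro τ hτ
    have hτ0 : 0 < τ := lt_of_lt_of_le hv hτ.1
    rw [abs_div, abs_of_pos hτ0]
    exact div_le_div_of_nonneg_right (hK τ hτ) hτ0.le
  have h3 : (∫ τ in v..w, K / τ) = K * (Real.log w - Real.log v) := by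
    have : (∫ τ in v..w, K / τ) = K * ∫ τ in v..w, 1 / τ := by
      rw [← intervalIntegral.integral_const_mul]
      congr 1; ext τ; ring
    rw [this, integral_one_div_of_pos hv hw, Real.log_div (ne_of_gt hw) (ne_of_gt hv)]
  have h0 : 0 ≤ ∫ τ in v..w, abs (f τ / τ) := by
    apply intervalIntegral.integral_nonneg hvw
    intro τ _; exact abs_nonneg _
  calc |∫ τ in v..w, f τ / τ| ≤ |∫ τ in v..w, abs (f τ / τ)| := h1
    _ = ∫ τ in v..w, abs (f τ / τ) := abs_of_nonneg h0
    _ ≤ ∫ τ in v..w, K / τ := h2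
    _ = K * (Real.log w - Real.log v) := h3

lemma aux_bound (f : ℝ → ℝ) (hf : Measurable f) (M : ℝ) (hM : ∀ t, |f t| ≤ M)
    (K : ℝ) {v w : ℝ} (hv : 0 < v) (hvw : v ≤ w)
    (hK : ∀ τ ∈ Icc v w, |f τ| ≤ K) :
    |∫ τ in v..w, f τ / τ| ≤ K * (Real.log w - Real.log v) :=
  aux_bound_int f (aux_integrable_div f hf M hM hv (lt_of_lt_of_le hv hvw)) K hv hvw hK

lemma aux_add (f : ℝ → ℝ) (hf : Measurable f) (M : ℝ) (hM : ∀ t, |f t| ≤ M)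
    {v w : ℝ} (hv : 0 < v) (hw : 0 < w) :
    (∫ τ in v..1, f τ / τ) - (∫ τ in w..1, f τ / τ) = ∫ τ in v..w, f τ / τ := by
  have h1 := intervalIntegral.integral_add_adjacent_intervals
    (aux_integrable_div f hf M hM hv hw) (aux_integrable_div f hf M hM hw one_pos)
    (μ := volume)
  linarith [h1]

lemma aux_exp_abs {a M : ℝ} (h : |a| ≤ M) : |Real.exp a - 1| ≤ Real.exp M - 1 := by
  rcases le_total 0 a with ha | ha
  · rw [abs_of_nonneg (by linarith [Real.one_le_exp ha] : (0:ℝ) ≤ Real.exp a - 1)]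
    have : a ≤ M := le_trans (le_abs_self a) h
    linarith [Real.exp_le_exp.2 this]
  · rw [abs_of_nonpos (by linarith [Real.exp_le_one_iff.2 ha] : Real.exp a - 1 ≤ 0)]
    have hM : -a ≤ M := by rw [abs_of_nonpos ha] at h; exact h
    have h2 : Real.exp (-a) ≤ Real.exp M := Real.exp_le_exp.2 hM
    have h3 : Real.exp a * Real.exp (-a) = 1 := by
      rw [← Real.exp_add]; simp
    nlinarith [Real.exp_pos a, Real.exp_pos (-a), Real.exp_pos M,
      sq_nonneg (Real.exp a - 1)]

lemma aux_contE (f : ℝ → ℝ) (hf : Measurable f) (M : ℝ) (hM : ∀ t, |f t| ≤ M)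
    {m : ℝ} (hm : 0 < m) (hm1 : m ≤ 1) :
    ContinuousOn (fun v => ∫ τ in v..1, f τ / τ) (Icc m 1) := by
  have := intervalIntegral.continuousOn_primitive_interval_left
    (f := fun τ => f τ / τ) (μ := volume) (a := m) (b := 1)
    (by
      rw [uIcc_of_le hm1]
      rw [integrableOn_Icc_iff_integrableOn_Ioc]
      have := (aux_integrable_div f hf M hM hm one_pos).1
      exact this )
  rwa [uIcc_of_le hm1] at this


/-- First-order Gumbel-domain limit from the de Haan representation. -/
theorem gumbel_first_order_from_representation
    (c d : ℝ) (hc : 0 < c) (p b : ℝ → ℝ)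
    (hpm : Measurable p) (hbm : Measurable b)
    (hpb : ∃ M : ℝ, ∀ u ∈ Set.Ioo (0:ℝ) 1, |p u| ≤ M)
    (hbb : ∃ M : ℝ, ∀ u ∈ Set.Ioo (0:ℝ) 1, |b u| ≤ M)
    (hp0 : Tendsto p (𝓝[>] 0) (𝓝 0))
    (hb0 : Tendsto b (𝓝[>] 0) (𝓝 0))
    (hppos : ∀ u ∈ Set.Ioo (0:ℝ) 1, 0 < 1 + p u)
    (s Q : ℝ → ℝ)
    (hs : ∀ u ∈ Set.Ioo (0:ℝ) 1, s u = c * (1 + p u) * Real.exp (∫ t in u..1, b t / t))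
    (hQ : ∀ u ∈ Set.Ioo (0:ℝ) 1, Q u = d - s u + ∫ t in u..1, s t / t)
    (x : ℝ) (hx : 0 < x) :
    Tendsto (fun u => (Q (x * u) - Q u) / s u) (𝓝[>] 0) (𝓝 (-Real.log x)) := by
  classical
  obtain ⟨Mp₀, hMp₀⟩ := hpb
  obtain ⟨Mb₀, hMb₀⟩ := hbb
  set Mp : ℝ := max Mp₀ 0 with hMpdef
  set Mb : ℝ := max Mb₀ 0 with hMbdef
  set p' : ℝ → ℝ := fun t => if t ∈ Set.Ioo (0:ℝ) 1 then p t else 0 with hp'def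
  set b' : ℝ → ℝ := fun t => if t ∈ Set.Ioo (0:ℝ) 1 then b t else 0 with hb'def
  have hp'm : Measurable p' := Measurable.ite measurableSet_Ioo hpm measurable_const
  have hb'm : Measurable b' := Measurable.ite measurableSet_Ioo hbm measurable_const
  have hMp : ∀ t, |p' t| ≤ Mp := by
    intro t; by_cases ht : t ∈ Set.Ioo (0:ℝ) 1
    · simp only [hp'def, if_pos ht]; exact le_trans (hMp₀ t ht) (le_max_left _ _)
    · simp only [hp'def, if_neg ht, abs_zero]; exact le_max_right _ _
  have hMb : ∀ t, |b' t| ≤ Mb := by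
    intro t; by_cases ht : t ∈ Set.Ioo (0:ℝ) 1
    · simp only [hb'def, if_pos ht]; exact le_trans (hMb₀ t ht) (le_max_left _ _)
    · simp only [hb'def, if_neg ht, abs_zero]; exact le_max_right _ _
  have hp'pos : ∀ t, 0 < 1 + p' t := by
    intro t; by_cases ht : t ∈ Set.Ioo (0:ℝ) 1
    · simp only [hp'def, if_pos ht]; exact hppos t ht
    · simp only [hp'def, if_neg ht]; norm_num
  set E : ℝ → ℝ := fun v => ∫ τ in v..(1:ℝ), b' τ / τ with hEdef
  set s' : ℝ → ℝ := fun t => c * (1 + p' t) * Real.exp (E t) with hs'def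
  have hs'pos : ∀ t, 0 < s' t := fun t =>
    mul_pos (mul_pos hc (hp'pos t)) (Real.exp_pos _)
  have hne1 : ∀ᵐ t : ℝ, t ≠ (1:ℝ) := by
    rw [ae_iff]
    have : {t : ℝ | ¬ t ≠ 1} = {1} := by ext t; simp
    rw [this]; exact measure_singleton 1
  have hbcong : ∀ u ∈ Set.Ioo (0:ℝ) 1, (∫ t in u..(1:ℝ), b t / t) = E u := by
    intro u hu
    apply intervalIntegral.integral_congr_ae
    filter_upwards [hne1] with t ht1 ht
    rw [uIoc_of_le hu.2.le] at ht
    have htIoo : t ∈ Set.Ioo (0:ℝ) 1 := ⟨hu.1.trans ht.1, lt_of_le_of_ne ht.2 ht1⟩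
    simp only [hb'def, if_pos htIoo]
  have hseq : ∀ u ∈ Set.Ioo (0:ℝ) 1, s u = s' u := by
    intro u hu
    rw [hs u hu, hbcong u hu, hs'def]
    simp only [hp'def, if_pos hu]
  have hEsub : ∀ v w : ℝ, 0 < v → 0 < w → E v - E w = ∫ τ in v..w, b' τ / τ :=
    fun v w hv hw => aux_add b' hb'm Mb hMb hv hw
  have hMp0 : 0 ≤ Mp := le_max_right _ _
  have hMb0 : 0 ≤ Mb := le_max_right _ _
  have hEbound : ∀ t : ℝ, 0 < t → t ≤ 1 → |E t| ≤ Mb * (0 - Real.log t) := by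
    intro t ht ht1
    have := aux_bound b' hb'm Mb hMb Mb ht ht1 (fun τ _ => hMb τ)
    rwa [Real.log_one] at this
  have hs'i : ∀ v w : ℝ, 0 < v → 0 < w → v ≤ 1 → w ≤ 1 →
      IntervalIntegrable (fun t => s' t / t) volume v w := by
    intro v w hv hw hv1 hw1
    have hm : 0 < min v w := lt_min hv hw
    have hm1 : min v w ≤ 1 := le_trans (min_le_left _ _) hv1
    have hM1 : max v w ≤ 1 := max_le hv1 hw1
    rw [intervalIntegrable_iff]
    have hfin : IsFiniteMeasure (volume.restrict (Set.uIoc v w)) := by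
      constructor
      rw [Measure.restrict_apply_univ]
      exact measure_Ioc_lt_top
    have hEc : ContinuousOn E (Icc (min v w) 1) := aux_contE b' hb'm Mb hMb hm hm1
    have hsub : Set.uIoc v w ⊆ Icc (min v w) 1 := fun t ht => ⟨ht.1.le, le_trans ht.2 hM1⟩
    have hfuneq : (fun t => s' t / t) = fun t => c * (1 + p' t) * Real.exp (E t) * t⁻¹ := by
      funext t
      rw [hs'def, div_eq_mul_inv]
    rw [hfuneq]
    apply MeasureTheory.Integrable.mono'
      (g := fun _ => c * (1 + Mp) * Real.exp (Mb * (0 - Real.log (min v w))) / min v w)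
      (integrable_const _)
    · apply AEStronglyMeasurable.mul
      apply AEStronglyMeasurable.mul
      · exact ((measurable_const.mul (measurable_const.add hp'm)).aestronglyMeasurable).restrict
      · exact ((Real.continuous_exp.comp_continuousOn (hEc.mono hsub)).aestronglyMeasurable
          measurableSet_uIoc)
      · exact (measurable_inv.aestronglyMeasurable).restrict
    · filter_upwards [MeasureTheory.ae_restrict_mem measurableSet_uIoc] with t ht
      have ht0 : min v w < t := ht.1
      have ht1 : t ≤ 1 := le_trans ht.2 hM1
      have hEb : |E t| ≤ Mb * (0 - Real.log (min v w)) := by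
        refine le_trans (hEbound t (hm.trans ht0) ht1) ?_
        apply mul_le_mul_of_nonneg_left _ hMb0
        have := Real.log_le_log hm ht0.le
        linarith
      have hEb2 : Real.exp (E t) ≤ Real.exp (Mb * (0 - Real.log (min v w))) :=
        Real.exp_le_exp.2 (le_trans (le_abs_self _) hEb)
      have hp1 : 0 < 1 + p' t := hp'pos t
      have hp2 : 1 + p' t ≤ 1 + Mp := by
        have := le_trans (le_abs_self _) (hMp t)
        linarith
      rw [Real.norm_eq_abs, abs_mul, abs_mul, abs_mul]
      rw [abs_of_pos hc, abs_of_pos hp1, abs_of_pos (Real.exp_pos _),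
        abs_of_pos (inv_pos.2 (hm.trans ht0))]
      rw [div_eq_mul_inv]
      have h1 : c * (1 + p' t) * Real.exp (E t) ≤
          c * (1 + Mp) * Real.exp (Mb * (0 - Real.log (min v w))) := by
        apply mul_le_mul
        · exact mul_le_mul_of_nonneg_left hp2 hc.le
        · exact hEb2
        · exact (Real.exp_pos _).le
        · positivity
      apply mul_le_mul h1 _ (inv_pos.2 (hm.trans ht0)).le
        (mul_nonneg (mul_nonneg hc.le (by linarith)) (Real.exp_pos _).le)
      exact inv_anti₀ hm ht0.le
  set mn : ℝ := min 1 x with hmndef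
  set mx : ℝ := max 1 x with hmxdef
  have hmn0 : 0 < mn := lt_min one_pos hx
  have hmx0 : 0 < mx := lt_of_lt_of_le one_pos (le_max_left _ _)
  have hmn1 : mn ≤ 1 := min_le_left _ _
  have hmx1 : 1 ≤ mx := le_max_left _ _
  have hmnmx : mn ≤ mx := le_trans hmn1 hmx1
  set L : ℝ := |Real.log x| with hLdef
  have hL0 : 0 ≤ L := abs_nonneg _
  have habs : ∀ (f : ℝ → ℝ) (u : ℝ), 0 < u →
      |∫ τ in (x*u)..u, f τ| = |∫ τ in (u*mn)..(u*mx), f τ| := by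
    intro f u _
    rcases le_total x 1 with h | h
    · rw [hmndef, hmxdef, min_eq_right h, max_eq_left h, mul_comm u x, mul_one]
    · rw [hmndef, hmxdef, min_eq_left h, max_eq_right h, mul_comm u x, mul_one,
        intervalIntegral.integral_symm, abs_neg]
  have hlog : ∀ u : ℝ, 0 < u → Real.log (u*mx) - Real.log (u*mn) = L := by
    intro u hu
    rw [Real.log_mul hu.ne' hmx0.ne', Real.log_mul hu.ne' hmn0.ne']
    rcases le_total x 1 with h | h
    · rw [hmndef, hmxdef, min_eq_right h, max_eq_left h, hLdef,
        abs_of_nonpos (Real.log_nonpos hx.le h)]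
      simp
    · rw [hmndef, hmxdef, min_eq_left h, max_eq_right h, hLdef,
        abs_of_nonneg (Real.log_nonneg h)]
      simp
  have hmem_x : ∀ u : ℝ, 0 < u → x*u ∈ Icc (u*mn) (u*mx) := by
    intro u hu
    constructor
    · rw [mul_comm x u]
      exact mul_le_mul_of_nonneg_left (min_le_right 1 x) hu.le
    · rw [mul_comm x u]
      exact mul_le_mul_of_nonneg_left (le_max_right 1 x) hu.le
  have hmem_u : ∀ u : ℝ, 0 < u → u ∈ Icc (u*mn) (u*mx) := by
    intro u hu
    constructor
    · calc u * mn ≤ u * 1 := mul_le_mul_of_nonneg_left hmn1 hu.le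
        _ = u := mul_one u
    · calc u = u * 1 := (mul_one u).symm
        _ ≤ u * mx := mul_le_mul_of_nonneg_left hmx1 hu.le
  have hxmap : Tendsto (fun u : ℝ => x * u) (𝓝[>] 0) (𝓝[>] 0) := by
    apply tendsto_nhdsWithin_of_tendsto_nhds_of_eventually_within
    · have h1 : Tendsto (fun u : ℝ => x * u) (𝓝 0) (𝓝 (x * 0)) :=
        (continuous_const.mul continuous_id).tendsto 0
      rw [mul_zero] at h1
      exact h1.mono_left nhdsWithin_le_nhds
    · filter_upwards [eventually_mem_nhdsWithin] with u hu
      exact mul_pos hx hu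
  have hIoo_mem : Set.Ioo (0:ℝ) 1 ∈ 𝓝[>] (0:ℝ) :=
    Ioo_mem_nhdsGT_of_mem ⟨le_refl 0, one_pos⟩
  have hp'0 : Tendsto p' (𝓝[>] 0) (𝓝 0) := by
    apply hp0.congr'
    filter_upwards [hIoo_mem] with t ht
    show p t = if t ∈ Set.Ioo (0:ℝ) 1 then p t else 0
    rw [if_pos ht]
  have hb'0 : Tendsto b' (𝓝[>] 0) (𝓝 0) := by
    apply hb0.congr'
    filter_upwards [hIoo_mem] with t ht
    show b t = if t ∈ Set.Ioo (0:ℝ) 1 then b t else 0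
    rw [if_pos ht]
  -- ratio identity
  have hratio : ∀ t u : ℝ, 0 < t → 0 < u →
      s' t / s' u = ((1 + p' t) / (1 + p' u)) * Real.exp (∫ τ in t..u, b' τ / τ) := by
    intro t u ht hu
    rw [← hEsub t u ht hu, Real.exp_sub, hs'def]
    have h1 : (1 + p' u) ≠ 0 := (hp'pos u).ne'
    have h2 : Real.exp (E u) ≠ 0 := (Real.exp_pos _).ne'
    field_simp
  -- W tends to 0
  have hW0 : Tendsto (fun u => ∫ τ in (x*u)..u, b' τ / τ) (𝓝[>] 0) (𝓝 0) := by
    rw [Metric.tendsto_nhds]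
    intro ε hε
    set K := ε / (2 * (L + 1)) with hKdef
    have hK : 0 < K := by
      apply div_pos hε
      nlinarith [hL0]
    obtain ⟨δ, hδ0, hδ⟩ := Metric.tendsto_nhdsWithin_nhds.1 hb'0 K hK
    have hρ : 0 < δ / mx := div_pos hδ0 hmx0
    filter_upwards [Ioo_mem_nhdsGT_of_mem ⟨le_refl (0:ℝ), hρ⟩] with u hu
    have hu0 : 0 < u := hu.1
    have humx : u * mx < δ := (lt_div_iff₀ hmx0).1 hu.2
    rw [Real.dist_eq, sub_zero]
    rw [habs _ u hu0]
    have hv0 : 0 < u * mn := mul_pos hu0 hmn0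
    have hbd : ∀ τ ∈ Icc (u*mn) (u*mx), |b' τ| ≤ K := by
      intro τ hτ
      have hτ0 : 0 < τ := lt_of_lt_of_le hv0 hτ.1
      have hd : dist τ 0 < δ := by
        rw [Real.dist_eq, sub_zero, abs_of_pos hτ0]
        exact lt_of_le_of_lt hτ.2 humx
      have := hδ (mem_Ioi.2 hτ0) hd
      rw [Real.dist_eq, sub_zero] at this
      exact this.le
    have h2 := aux_bound_int b'
      (aux_integrable_div b' hb'm Mb hMb hv0 (mul_pos hu0 hmx0)) K hv0
      (mul_le_mul_of_nonneg_left hmnmx hu0.le) hbd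
    rw [hlog u hu0] at h2
    have h3 : K * (L + 1) = ε / 2 := by
      rw [hKdef]
      field_simp
    calc |∫ τ in (u*mn)..(u*mx), b' τ / τ| ≤ K * L := h2
      _ < ε := by nlinarith [hK, hL0]
  have T1 : Tendsto (fun u => s' (x*u) / s' u) (𝓝[>] 0) (𝓝 1) := by
    have hident : (fun u => ((1 + p' (x*u)) / (1 + p' u)) *
        Real.exp (∫ τ in (x*u)..u, b' τ / τ)) =ᶠ[𝓝[>] (0:ℝ)]
        (fun u => s' (x*u) / s' u) := by
      filter_upwards [eventually_mem_nhdsWithin] with u hu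
      exact (hratio (x*u) u (mul_pos hx hu) hu).symm
    apply Tendsto.congr' hident
    have h1 : Tendsto (fun u => 1 + p' (x*u)) (𝓝[>] (0:ℝ)) (𝓝 1) := by
      have := tendsto_const_nhds (x := (1:ℝ)) (f := 𝓝[>] (0:ℝ)) |>.add (hp'0.comp hxmap)
      simpa using this
    have h2 : Tendsto (fun u => 1 + p' u) (𝓝[>] (0:ℝ)) (𝓝 1) := by
      have := tendsto_const_nhds (x := (1:ℝ)) (f := 𝓝[>] (0:ℝ)) |>.add hp'0
      simpa using this
    have hA : Tendsto (fun u => (1 + p' (x*u)) / (1 + p' u)) (𝓝[>] (0:ℝ)) (𝓝 1) := by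
      have := h1.div h2 one_ne_zero
      rw [div_one] at this; exact this
    have hB : Tendsto (fun u => Real.exp (∫ τ in (x*u)..u, b' τ / τ)) (𝓝[>] (0:ℝ)) (𝓝 1) := by
      have := (Real.continuous_exp.continuousAt (x := (0:ℝ))).tendsto.comp hW0
      rw [Real.exp_zero] at this; exact this
    have := hA.mul hB
    simpa using this
  have T2 : Tendsto (fun u => (∫ t in (x*u)..u, s' t / t) / s' u) (𝓝[>] 0)
      (𝓝 (-Real.log x)) := by
    rw [Metric.tendsto_nhds]
    intro ε hε
    set φ : ℝ → ℝ := fun η => 2 * ((1 + η) * (Real.exp (η * L) - 1) + 2 * η) * L with hφdef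
    have hφcont : Continuous φ := by
      apply Continuous.mul _ continuous_const
      apply Continuous.mul continuous_const
      apply Continuous.add
      · exact (continuous_const.add continuous_id).mul
          ((Real.continuous_exp.comp (continuous_id.mul continuous_const)).sub continuous_const)
      · exact continuous_const.mul continuous_id
    have hφ0 : φ 0 = 0 := by simp [hφdef]
    have hev : ∀ᶠ η in 𝓝 (0:ℝ), φ η < ε := by
      have h := hφcont.continuousAt (x := (0:ℝ)).tendsto
      rw [hφ0] at h
      exact h.eventually (Filter.Tendsto.eventually_lt_const hε tendsto_id)
    have hev2 : ∀ᶠ η in 𝓝[>] (0:ℝ), (φ η < ε ∧ η < 1/2) ∧ η ∈ Set.Ioi (0:ℝ) := by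
      refine Filter.Eventually.and (Filter.Eventually.and ?_ ?_) eventually_mem_nhdsWithin
      · exact hev.filter_mono nhdsWithin_le_nhds
      · exact eventually_nhdsWithin_of_eventually_nhds
          (Filter.Tendsto.eventually_lt_const (by norm_num : (0:ℝ) < 1/2) tendsto_id)
    obtain ⟨η, ⟨hηφ, hη2⟩, hη0'⟩ := hev2.exists
    have hη0 : 0 < η := hη0'
    obtain ⟨δ₁, hδ₁0, hδ₁⟩ := Metric.tendsto_nhdsWithin_nhds.1 hp'0 η hη0
    obtain ⟨δ₂, hδ₂0, hδ₂⟩ := Metric.tendsto_nhdsWithin_nhds.1 hb'0 η hη0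
    set δ := min (min δ₁ δ₂) 1 with hδdef
    have hδ0 : 0 < δ := lt_min (lt_min hδ₁0 hδ₂0) one_pos
    have hδ1 : δ ≤ 1 := min_le_right _ _
    have hρ : 0 < δ / mx := div_pos hδ0 hmx0
    filter_upwards [Ioo_mem_nhdsGT_of_mem ⟨le_refl (0:ℝ), hρ⟩] with u hu
    have hu0 : 0 < u := hu.1
    have hxu0 : 0 < x * u := mul_pos hx hu0
    have humx : u * mx < δ := (lt_div_iff₀ hmx0).1 hu.2
    have hv0 : 0 < u * mn := mul_pos hu0 hmn0
    have hw0 : 0 < u * mx := mul_pos hu0 hmx0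
    have hvw : u * mn ≤ u * mx := mul_le_mul_of_nonneg_left hmnmx hu0.le
    have hwle1 : u * mx ≤ 1 := le_trans humx.le hδ1
    have hu1 : u ≤ 1 := le_trans (hmem_u u hu0).2 hwle1
    have hxu1 : x * u ≤ 1 := le_trans (hmem_x u hu0).2 hwle1
    have hpsm : ∀ τ ∈ Icc (u*mn) (u*mx), |p' τ| ≤ η := by
      intro τ hτ
      have hτ0 : 0 < τ := lt_of_lt_of_le hv0 hτ.1
      have hd : dist τ 0 < δ₁ := by
        rw [Real.dist_eq, sub_zero, abs_of_pos hτ0]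
        exact lt_of_le_of_lt hτ.2 (lt_of_lt_of_le humx (le_trans (min_le_left _ _) (min_le_left _ _)))
      have := hδ₁ (mem_Ioi.2 hτ0) hd
      rw [Real.dist_eq, sub_zero] at this
      exact this.le
    have hbsm : ∀ τ ∈ Icc (u*mn) (u*mx), |b' τ| ≤ η := by
      intro τ hτ
      have hτ0 : 0 < τ := lt_of_lt_of_le hv0 hτ.1
      have hd : dist τ 0 < δ₂ := by
        rw [Real.dist_eq, sub_zero, abs_of_pos hτ0]
        exact lt_of_le_of_lt hτ.2 (lt_of_lt_of_le humx (le_trans (min_le_left _ _) (min_le_right _ _)))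
      have := hδ₂ (mem_Ioi.2 hτ0) hd
      rw [Real.dist_eq, sub_zero] at this
      exact this.le
    set K0 : ℝ := 2 * ((1 + η) * (Real.exp (η * L) - 1) + 2 * η) with hK0def
    have hlogmono : ∀ t ∈ Icc (u*mn) (u*mx), Real.log (u*mn) ≤ Real.log t ∧
        Real.log t ≤ Real.log (u*mx) := by
      intro t ht
      exact ⟨Real.log_le_log hv0 ht.1, Real.log_le_log (lt_of_lt_of_le hv0 ht.1) ht.2⟩
    have hrb : ∀ t ∈ Icc (u*mn) (u*mx), |s' t / s' u - 1| ≤ K0 := by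
      intro t htI
      have ht0 : 0 < t := lt_of_lt_of_le hv0 htI.1
      have huI : u ∈ Icc (u*mn) (u*mx) := hmem_u u hu0
      have hD : |∫ τ in t..u, b' τ / τ| ≤ η * L := by
        have hLu := hlog u hu0
        rcases le_total t u with h | h
        · have hb := aux_bound_int b' (aux_integrable_div b' hb'm Mb hMb ht0 hu0) η ht0 h
            (fun τ hτ => hbsm τ ⟨le_trans htI.1 hτ.1, le_trans hτ.2 huI.2⟩)
          refine le_trans hb ?_
          apply mul_le_mul_of_nonneg_left _ hη0.le
          have h1 := (hlogmono u huI).2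
          have h2 := (hlogmono t htI).1
          linarith
        · rw [intervalIntegral.integral_symm, abs_neg]
          have hb := aux_bound_int b' (aux_integrable_div b' hb'm Mb hMb hu0 ht0) η hu0 h
            (fun τ hτ => hbsm τ ⟨le_trans huI.1 hτ.1, le_trans hτ.2 htI.2⟩)
          refine le_trans hb ?_
          apply mul_le_mul_of_nonneg_left _ hη0.le
          have h1 := (hlogmono t htI).2
          have h2 := (hlogmono u huI).1
          linarith
      have heq : s' t / s' u - 1 =
          ((1 + p' t) * Real.exp (∫ τ in t..u, b' τ / τ) - (1 + p' u)) / (1 + p' u) := by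
        rw [hratio t u ht0 hu0]
        have h1 : (1 + p' u) ≠ 0 := (hp'pos u).ne'
        field_simp
      rw [heq, abs_div, abs_of_pos (hp'pos u)]
      have hexpb : |Real.exp (∫ τ in t..u, b' τ / τ) - 1| ≤ Real.exp (η * L) - 1 :=
        aux_exp_abs hD
      have hexp0 : (0:ℝ) ≤ Real.exp (η * L) - 1 := by
        have := Real.one_le_exp (mul_nonneg hη0.le hL0)
        linarith
      have hpt : |p' t| ≤ η := hpsm t htI
      have hpu : |p' u| ≤ η := hpsm u huI
      have hnum : |(1 + p' t) * Real.exp (∫ τ in t..u, b' τ / τ) - (1 + p' u)| ≤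
          (1 + η) * (Real.exp (η * L) - 1) + 2 * η := by
        have hrw : (1 + p' t) * Real.exp (∫ τ in t..u, b' τ / τ) - (1 + p' u) =
            (1 + p' t) * (Real.exp (∫ τ in t..u, b' τ / τ) - 1) + (p' t - p' u) := by ring
        rw [hrw]
        refine le_trans (abs_add_le _ _) ?_
        have h1 : |(1 + p' t) * (Real.exp (∫ τ in t..u, b' τ / τ) - 1)| ≤
            (1 + η) * (Real.exp (η * L) - 1) := by
          rw [abs_mul]
          apply mul_le_mul _ hexpb (abs_nonneg _) (by linarith [hη0.le])
          calc |1 + p' t| ≤ 1 + |p' t| := by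
                have := abs_add_le (1:ℝ) (p' t)
                simpa using this
            _ ≤ 1 + η := by linarith
        have h2 : |p' t - p' u| ≤ 2 * η := by
          have := abs_sub (p' t) (p' u)
          calc |p' t - p' u| ≤ |p' t| + |p' u| := abs_sub _ _
            _ ≤ 2 * η := by linarith
        linarith
      have hden : 1/2 ≤ 1 + p' u := by
        have := neg_abs_le (p' u)
        linarith
      have hnum0 : (0:ℝ) ≤ (1 + η) * (Real.exp (η * L) - 1) + 2 * η := by
        have : (0:ℝ) ≤ (1 + η) * (Real.exp (η * L) - 1) :=
          mul_nonneg (by linarith [hη0.le]) hexp0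
        linarith
      calc |(1 + p' t) * Real.exp (∫ τ in t..u, b' τ / τ) - (1 + p' u)| / (1 + p' u)
          ≤ ((1 + η) * (Real.exp (η * L) - 1) + 2 * η) / (1/2) :=
            div_le_div₀ hnum0 hnum (by norm_num) hden
        _ = K0 := by rw [hK0def]; ring
    have hs'une : s' u ≠ 0 := (hs'pos u).ne'
    have hfe : (fun τ : ℝ => (s' τ / s' u - 1) / τ) =
        fun τ : ℝ => (s' u)⁻¹ * (s' τ / τ) - 1/τ := by
      funext τ
      ring
    have hint1 : ∀ a a' : ℝ, 0 < a → 0 < a' → a ≤ 1 → a' ≤ 1 →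
        IntervalIntegrable (fun τ : ℝ => (s' τ / s' u - 1) / τ) volume a a' := by
      intro a a' ha ha' ha1 ha'1
      rw [hfe]
      apply IntervalIntegrable.sub
      · exact (hs'i a a' ha ha' ha1 ha'1).const_mul _
      · apply ContinuousOn.intervalIntegrable
        apply ContinuousOn.div continuousOn_const continuousOn_id
        intro τ hτ
        rcases le_total a a' with h | h
        · rw [uIcc_of_le h] at hτ; exact ne_of_gt (lt_of_lt_of_le ha hτ.1)
        · rw [uIcc_of_ge h] at hτ; exact ne_of_gt (lt_of_lt_of_le ha' hτ.1)
    have honediv : IntervalIntegrable (fun τ : ℝ => 1/τ) volume (x*u) u := by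
      apply ContinuousOn.intervalIntegrable
      apply ContinuousOn.div continuousOn_const continuousOn_id
      intro τ hτ
      rcases le_total (x*u) u with h | h
      · rw [uIcc_of_le h] at hτ; exact ne_of_gt (lt_of_lt_of_le hxu0 hτ.1)
      · rw [uIcc_of_ge h] at hτ; exact ne_of_gt (lt_of_lt_of_le hu0 hτ.1)
    have hlogint : (∫ t in (x*u)..u, 1 / t) = - Real.log x := by
      rw [integral_one_div (by
        intro h0
        rcases le_total (x*u) u with h | h
        · rw [uIcc_of_le h] at h0; exact absurd h0.1 (not_le.2 hxu0)
        · rw [uIcc_of_ge h] at h0; exact absurd h0.1 (not_le.2 hu0))]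
      have huxu : u / (x*u) = x⁻¹ := by
        field_simp
      rw [huxu, Real.log_inv]
    have hJeq : (∫ t in (x*u)..u, s' t / t) / s' u - (- Real.log x) =
        ∫ t in (x*u)..u, (s' t / s' u - 1) / t := by
      have h1 : (∫ t in (x*u)..u, (s' t / s' u - 1) / t) =
          ∫ t in (x*u)..u, ((s' u)⁻¹ * (s' t / t) - 1/t) := by
        rw [hfe]
      rw [h1, intervalIntegral.integral_sub ((hs'i (x*u) u hxu0 hu0 hxu1 hu1).const_mul _)
        honediv, intervalIntegral.integral_const_mul, hlogint]
      ring
    rw [Real.dist_eq, hJeq]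
    rw [habs _ u hu0]
    have hfinalb := aux_bound_int (fun τ => s' τ / s' u - 1)
      (hint1 (u*mn) (u*mx) hv0 hw0 (le_trans hvw hwle1) hwle1) K0 hv0 hvw hrb
    rw [hlog u hu0] at hfinalb
    calc |∫ τ in (u*mn)..(u*mx), (s' τ / s' u - 1) / τ| ≤ K0 * L := hfinalb
      _ = φ η := by rw [hφdef, hK0def]
      _ < ε := hηφ
  -- assembly
  have hfinal : Tendsto (fun u => 1 - s' (x*u) / s' u + (∫ t in (x*u)..u, s' t / t) / s' u)
      (𝓝[>] 0) (𝓝 (-Real.log x)) := by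
    have h := (tendsto_const_nhds (x := (1:ℝ)) (f := 𝓝[>] (0:ℝ))).sub T1 |>.add T2
    simpa using h
  apply hfinal.congr'
  have hρ2 : 0 < 1 / mx := by positivity
  filter_upwards [Ioo_mem_nhdsGT_of_mem ⟨le_refl (0:ℝ), hρ2⟩] with u hu
  have hu0 : 0 < u := hu.1
  have humx : u * mx < 1 := (lt_div_iff₀ hmx0).1 hu.2
  have hu1 : u ∈ Set.Ioo (0:ℝ) 1 := ⟨hu0, lt_of_le_of_lt (hmem_u u hu0).2 humx⟩
  have hxu1 : x*u ∈ Set.Ioo (0:ℝ) 1 := ⟨mul_pos hx hu0, lt_of_le_of_lt (hmem_x u hu0).2 humx⟩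
  have hsint : ∀ a, a ∈ Set.Ioo (0:ℝ) 1 →
      (∫ t in a..(1:ℝ), s t / t) = ∫ t in a..(1:ℝ), s' t / t := by
    intro a ha
    apply intervalIntegral.integral_congr_ae
    filter_upwards [hne1] with t ht1 ht
    rw [uIoc_of_le ha.2.le] at ht
    rw [hseq t ⟨ha.1.trans ht.1, lt_of_le_of_ne ht.2 ht1⟩]
  have hs'une : s' u ≠ 0 := (hs'pos u).ne'
  have hadj := intervalIntegral.integral_add_adjacent_intervals
    (hs'i (x*u) u hxu1.1 hu0 hxu1.2.le hu1.2.le)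
    (hs'i u 1 hu0 one_pos hu1.2.le le_rfl) (μ := volume)
  show _ = (Q (x*u) - Q u) / s u
  rw [hQ _ hxu1, hQ _ hu1, hseq _ hxu1, hseq _ hu1, hsint _ hxu1, hsint _ hu1, ← hadj]
  field_simp
  ring
end

section
/- Let c > 0 and let p, b : (0,1) → ℝ be bounded measurable functions with p(u) → 0 and b(u) → 0 as u → 0⁺ and 1 + p(u) > 0 for all u ∈ (0,1). Define s(u) = c(1+p(u))·exp(∫_u^1 b(t)/t dt) for u ∈ (0,1). Then for every fixed x > 0: lim_{u→0⁺} sup{ |s(v)/s(u) − 1| : v ∈ [min(ux,u), max(ux,u)] } = 0 (the supremum being taken for u small enough that ux ∈ (0,1)). -/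
open Filter Topology Set MeasureTheory intervalIntegral
set_option maxHeartbeats 1000000

lemma svur_aux_integrable {b : ℝ → ℝ} (hbm : Measurable b) {M : ℝ}
    (hM : ∀ u ∈ Set.Ioo (0:ℝ) 1, |b u| ≤ M) {a a' : ℝ} (ha : 0 < a) (ha2 : 0 < a')
    (hb1 : a ≤ 1) (hb2 : a' ≤ 1) :
    IntervalIntegrable (fun t => b t / t) volume a a' := by
  have key : ∀ {r r' : ℝ}, 0 < r → r ≤ r' → r' ≤ 1 →
      IntervalIntegrable (fun t => b t / t) volume r r' := by
    intro r r' hr hrr' hr1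
    rw [intervalIntegrable_iff_integrableOn_Ioc_of_le hrr']
    apply Measure.integrableOn_of_bounded (M := (max M |b 1|) / r)
    · exact (measure_Ioc_lt_top).ne
    · exact (hbm.div measurable_id).aestronglyMeasurable
    · rw [ae_restrict_iff' measurableSet_Ioc]
      filter_upwards with t ht
      have ht0 : 0 < t := lt_of_lt_of_le hr ht.1.le
      have hbt : |b t| ≤ max M |b 1| := by
        rcases lt_or_eq_of_le (le_trans ht.2 hr1) with h | h
        · exact le_trans (hM t ⟨ht0, h⟩) (le_max_left _ _)
        · rw [h]; exact le_max_right _ _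
      have : ‖b t / t‖ = |b t| / t := by
        rw [Real.norm_eq_abs, abs_div, abs_of_pos ht0]
      rw [this]
      exact div_le_div₀ (le_trans (abs_nonneg _) hbt) hbt hr ht.1.le
  rcases le_total a a' with h | h
  · exact key ha h hb2
  · exact (key ha2 h hb1).symm

/-- Uniform ratio estimate (slow variation at 0) for the auxiliary function
`s(u) = c(1+p(u))·exp(∫_u^1 b(t)/t dt)` of the Karamata representation. -/
theorem slowly_varying_uniform_ratio
    (c : ℝ) (hc : 0 < c) (p b : ℝ → ℝ)
    (hpm : Measurable p) (hbm : Measurable b)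
    (hpb : ∃ M : ℝ, ∀ u ∈ Set.Ioo (0:ℝ) 1, |p u| ≤ M)
    (hbb : ∃ M : ℝ, ∀ u ∈ Set.Ioo (0:ℝ) 1, |b u| ≤ M)
    (hp0 : Tendsto p (𝓝[>] 0) (𝓝 0))
    (hb0 : Tendsto b (𝓝[>] 0) (𝓝 0))
    (hppos : ∀ u ∈ Set.Ioo (0:ℝ) 1, 0 < 1 + p u)
    (s : ℝ → ℝ)
    (hs : ∀ u ∈ Set.Ioo (0:ℝ) 1, s u = c * (1 + p u) * Real.exp (∫ t in u..1, b t / t))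
    (x : ℝ) (hx : 0 < x) :
    Tendsto (fun u => sSup ((fun v => |s v / s u - 1|) ''
        Set.Icc (min (u * x) u) (max (u * x) u))) (𝓝[>] 0) (𝓝 0) := by
  obtain ⟨Mb, hMb⟩ := hbb
  set K : ℝ := (max x 1 - min x 1) / min x 1 with hKdef
  have hminx : 0 < min x 1 := lt_min hx one_pos
  have hmaxx : (1:ℝ) ≤ max x 1 := le_max_right x 1
  have hK0 : 0 ≤ K := div_nonneg (by simp [sub_nonneg, min_le_of_right_le]) hminx.le
  rw [Metric.tendsto_nhds]
  intro ε hε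
  -- g δ := (1+δ)/(1-δ) * exp (δ*K)
  have hgt : Tendsto (fun d : ℝ => (1+d)/(1-d) * Real.exp (d*K)) (𝓝 0) (𝓝 1) := by
    have hcont : ContinuousAt (fun d : ℝ => (1+d)/(1-d) * Real.exp (d*K)) 0 := by
      fun_prop (disch := norm_num)
    have := hcont.tendsto
    norm_num at this
    exact this
  have hev : ∀ᶠ d in 𝓝 (0:ℝ), (1+d)/(1-d) * Real.exp (d*K) < 1 + ε/2 :=
    hgt.eventually (eventually_lt_nhds (by linarith))
  obtain ⟨r, hr0, hr⟩ := Metric.eventually_nhds_iff.mp hev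
  set δ : ℝ := min (r/2) (1/4) with hδdef
  have hδ0 : 0 < δ := lt_min (by linarith) (by norm_num)
  have hδh : δ < 1/2 := lt_of_le_of_lt (min_le_right _ _) (by norm_num)
  have hgδ : (1+δ)/(1-δ) * Real.exp (δ*K) < 1 + ε/2 := by
    apply hr
    rw [Real.dist_eq, sub_zero, abs_of_pos hδ0]
    exact lt_of_le_of_lt (min_le_left _ _) (by linarith)
  set g : ℝ := (1+δ)/(1-δ) * Real.exp (δ*K) with hgdef
  have hg1 : 1 ≤ g := by
    have h1 : (1:ℝ) ≤ (1+δ)/(1-δ) := by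
      rw [le_div_iff₀ (by linarith)]; linarith
    have h2 : (1:ℝ) ≤ Real.exp (δ*K) := Real.one_le_exp (by positivity)
    nlinarith
  -- choose η
  have hevpb : ∀ᶠ t in 𝓝[>] (0:ℝ), |p t| < δ ∧ |b t| < δ := by
    have h1 := hp0 (Metric.ball_mem_nhds 0 hδ0)
    have h2 := hb0 (Metric.ball_mem_nhds 0 hδ0)
    filter_upwards [h1, h2] with t h1 h2
    simp only [Set.mem_preimage, Metric.mem_ball, Real.dist_eq, sub_zero] at h1 h2
    exact ⟨h1, h2⟩
  obtain ⟨η, hη0, hη⟩ := mem_nhdsGT_iff_exists_Ioo_subset.mp hevpb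
  have hη0' : (0:ℝ) < η := hη0
  set η' : ℝ := min η 1 / max x 1 with hη'def
  have hη'0 : 0 < η' := div_pos (lt_min hη0' one_pos) (by linarith)
  filter_upwards [Ioo_mem_nhdsGT_of_mem (by exact ⟨le_refl 0, hη'0⟩ : (0:ℝ) ∈ Ico 0 η')]
    with u hu
  obtain ⟨hu0, huη'⟩ := hu
  have hMxlt : u * max x 1 < min η 1 := by
    rw [← lt_div_iff₀ (by linarith : (0:ℝ) < max x 1)]
    exact huη'
  have hm0 : 0 < u * min x 1 := mul_pos hu0 hminx
  have hmle : u * min x 1 ≤ u := by nlinarith [min_le_right x 1]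
  have huMx : u ≤ u * max x 1 := by nlinarith
  have hu1 : u < 1 := lt_of_le_of_lt huMx (lt_of_lt_of_le hMxlt (min_le_right _ _))
  have huη : u < η := lt_of_le_of_lt huMx (lt_of_lt_of_le hMxlt (min_le_left _ _))
  have hmlo : u * min x 1 ≤ min (u*x) u :=
    le_min (by nlinarith [min_le_left x 1]) hmle
  have hmhi : max (u*x) u ≤ u * max x 1 :=
    max_le (by nlinarith [le_max_left x 1]) huMx
  have hsu_pos : 0 < s u := by
    rw [hs u ⟨hu0, hu1⟩]
    have := hppos u ⟨hu0, hu1⟩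
    positivity
  -- pointwise estimate
  have hpt : ∀ v ∈ Icc (min (u*x) u) (max (u*x) u), |s v / s u - 1| ≤ g - 1 := by
    intro v hv
    have hv0 : 0 < v := lt_of_lt_of_le hm0 (le_trans hmlo hv.1)
    have hvMx : v ≤ u * max x 1 := le_trans hv.2 hmhi
    have hv1 : v < 1 := lt_of_le_of_lt hvMx (lt_of_lt_of_le hMxlt (min_le_right _ _))
    have hvη : v < η := lt_of_le_of_lt hvMx (lt_of_lt_of_le hMxlt (min_le_left _ _))
    have hvm : u * min x 1 ≤ v := le_trans hmlo hv.1
    -- integrability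
    have Ivu : IntervalIntegrable (fun t => b t / t) volume v u :=
      svur_aux_integrable hbm hMb hv0 hu0 hv1.le hu1.le
    have Iu1 : IntervalIntegrable (fun t => b t / t) volume u 1 :=
      svur_aux_integrable hbm hMb hu0 one_pos hu1.le le_rfl
    have hsplit : (∫ t in v..u, b t / t) + (∫ t in u..1, b t / t) = ∫ t in v..1, b t / t :=
      integral_add_adjacent_intervals Ivu Iu1
    set J : ℝ := ∫ t in v..u, b t / t with hJdef
    -- ratio formula
    have hratio : s v / s u = (1 + p v)/(1 + p u) * Real.exp J := by
      rw [hs v ⟨hv0, hv1⟩, hs u ⟨hu0, hu1⟩, ← hsplit, Real.exp_add]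
      have h1 := (hppos u ⟨hu0, hu1⟩).ne'
      have h2 := (Real.exp_pos (∫ t in u..1, b t / t)).ne'
      field_simp
    -- bound on J
    have hJbound : |J| ≤ δ * K := by
      have h1 : ‖J‖ ≤ (δ / (u * min x 1)) * |u - v| := by
        apply intervalIntegral.norm_integral_le_of_norm_le_const
        intro t ht
        rw [uIoc_eq_union] at ht
        have ht0 : u * min x 1 < t := by
          rcases ht with ht | ht
          · exact lt_of_le_of_lt hvm ht.1
          · exact lt_of_le_of_lt hmle ht.1
        have htMx : t ≤ u * max x 1 := by
          rcases ht with ht | ht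
          · exact le_trans ht.2 huMx
          · exact le_trans ht.2 hvMx
        have htη : t < η := lt_of_le_of_lt htMx (lt_of_lt_of_le hMxlt (min_le_left _ _))
        have ht1 : t < 1 := lt_of_le_of_lt htMx (lt_of_lt_of_le hMxlt (min_le_right _ _))
        have htpos : 0 < t := lt_trans hm0 ht0
        have hbt : |b t| < δ := (hη ⟨htpos, htη⟩).2
        have : ‖b t / t‖ = |b t| / t := by
          rw [Real.norm_eq_abs, abs_div, abs_of_pos htpos]
        rw [this]
        exact div_le_div₀ hδ0.le hbt.le hm0 ht0.le
      have h2 : |u - v| ≤ u * max x 1 - u * min x 1 := by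
        rw [abs_sub_le_iff]
        constructor <;> nlinarith
      have h3 : (δ / (u * min x 1)) * (u * max x 1 - u * min x 1) = δ * K := by
        rw [hKdef]; field_simp
      calc |J| ≤ (δ / (u * min x 1)) * |u - v| := h1
        _ ≤ (δ / (u * min x 1)) * (u * max x 1 - u * min x 1) := by
            apply mul_le_mul_of_nonneg_left h2 (div_nonneg hδ0.le hm0.le)
        _ = δ * K := h3
    have hexp_hi : Real.exp J ≤ Real.exp (δ*K) := Real.exp_le_exp.mpr (le_trans (le_abs_self J) hJbound)
    have hexp_lo : Real.exp (-(δ*K)) ≤ Real.exp J := Real.exp_le_exp.mpr (by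
      have := neg_abs_le J; linarith)
    have hpv : |p v| < δ := (hη ⟨hv0, hvη⟩).1
    have hpu : |p u| < δ := (hη ⟨hu0, huη⟩).1
    rw [abs_lt] at hpv hpu
    have hBpos : 0 < 1 + p u := by linarith
    have hApos : 0 < 1 + p v := by linarith
    -- upper bound
    have hub : s v / s u ≤ g := by
      rw [hratio, hgdef]
      have h1 : (1 + p v)/(1 + p u) ≤ (1+δ)/(1-δ) :=
        div_le_div₀ (by linarith) (by linarith) (by linarith) (by linarith)
      have h2 : 0 ≤ (1 + p v)/(1 + p u) := by positivity
      exact mul_le_mul h1 hexp_hi (Real.exp_pos _).le (div_nonneg (by linarith) (by linarith))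
    -- lower bound : s v / s u ≥ 1/g ≥ 2 - g
    have hlb : (1-δ)/(1+δ) * Real.exp (-(δ*K)) ≤ s v / s u := by
      rw [hratio]
      have h1 : (1-δ)/(1+δ) ≤ (1 + p v)/(1 + p u) :=
        div_le_div₀ (by linarith) (by linarith) (by linarith) (by linarith)
      exact mul_le_mul h1 hexp_lo (Real.exp_pos _).le (div_nonneg hApos.le hBpos.le)
    have hinv : (1-δ)/(1+δ) * Real.exp (-(δ*K)) = 1 / g := by
      rw [hgdef, Real.exp_neg]
      field_simp
    have hglb : 2 - g ≤ s v / s u := by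
      have hgpos : 0 < g := by linarith
      have : 2 - g ≤ 1 / g := by
        rw [le_div_iff₀ hgpos]; nlinarith
      rw [hinv] at hlb
      linarith
    rw [abs_le]
    constructor <;> linarith
  -- now the sup
  set S := (fun v => |s v / s u - 1|) '' Icc (min (u*x) u) (max (u*x) u) with hSdef
  have huI : u ∈ Icc (min (u*x) u) (max (u*x) u) := ⟨min_le_right _ _, le_max_right _ _⟩
  have hSne : S.Nonempty := ⟨_, Set.mem_image_of_mem _ huI⟩
  have hSbdd : ∀ y ∈ S, y ≤ g - 1 := by
    rintro y ⟨v, hv, rfl⟩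
    exact hpt v hv
  have hbdd : BddAbove S := ⟨g - 1, hSbdd⟩
  have hle : sSup S ≤ g - 1 := csSup_le hSne hSbdd
  have hge : 0 ≤ sSup S :=
    le_trans (abs_nonneg _) (le_csSup hbdd (Set.mem_image_of_mem _ huI))
  rw [Real.dist_eq, sub_zero, abs_of_nonneg hge]
  have : g - 1 < ε/2 := by linarith
  linarith
end

section
/- Let γ > 0 and ρ < 0, and define Q(u) = (u^ρ − 1)^{−γ/ρ} for u ∈ (0,1) (the quantile function F^{-1}(1−u) of the Burr distribution F(y) = 1 − (y^{−ρ/γ} + 1)^{1/ρ}, y ≥ 0). Then for every x > 0: lim_{u→0⁺} (u^ρ − 1)·( (Q(ux) − Q(u))/(γ·Q(u)) − (x^{−γ} − 1)/γ ) = −(x^ρ − 1)·x^{−γ−ρ}/ρ (the expression being taken for u small enough that ux ∈ (0,1)). -/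
open Filter Topology Set

/-- Second order condition for the Burr distribution quantile function. -/
theorem burr_second_order
    (γ ρ : ℝ) (hγ : 0 < γ) (hρ : ρ < 0)
    (Q : ℝ → ℝ) (hQ : ∀ u ∈ Set.Ioo (0:ℝ) 1, Q u = (u ^ ρ - 1) ^ (-γ / ρ))
    (x : ℝ) (hx : 0 < x) :
    Tendsto (fun u => (u ^ ρ - 1) *
        ((Q (u * x) - Q u) / (γ * Q u) - (x ^ (-γ) - 1) / γ)) (𝓝[>] 0)
      (𝓝 (-(x ^ ρ - 1) * x ^ (-γ - ρ) / ρ)) := by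
  have hρ0 : ρ ≠ 0 := ne_of_lt hρ
  have hγ0 : γ ≠ 0 := ne_of_gt hγ
  rcases eq_or_ne x 1 with rfl | hx1
  · have heq : (fun u : ℝ => (u ^ ρ - 1) *
        ((Q (u * 1) - Q u) / (γ * Q u) - ((1:ℝ) ^ (-γ) - 1) / γ)) =ᶠ[𝓝[>] (0:ℝ)]
        (fun _ => (0:ℝ)) := by
      filter_upwards with u
      simp
    rw [tendsto_congr' heq]
    have h0 : -(((1:ℝ) ^ ρ - 1)) * (1:ℝ) ^ (-γ - ρ) / ρ = 0 := by simp
    rw [h0]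
    exact tendsto_const_nhds
  · set a := x ^ ρ with ha_def
    have ha : 0 < a := Real.rpow_pos_of_pos hx ρ
    set c := a - 1 with hc_def
    have hc : c ≠ 0 := by
      rcases lt_trichotomy x 1 with h | h | h
      · have h1 : 1 < a := (Real.one_lt_rpow_iff_of_pos hx).mpr (Or.inr ⟨h, hρ⟩)
        rw [hc_def]; intro h2; nlinarith
      · exact absurd h hx1
      · have h1 : a < 1 := (Real.rpow_lt_one_iff_of_pos hx).mpr (Or.inl ⟨h, hρ⟩)
        rw [hc_def]; intro h2; nlinarith
    set β := -γ / ρ with hβ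
    have hg : HasDerivAt (fun s : ℝ => s ^ β) (β * a ^ (β - 1)) a :=
      Real.hasDerivAt_rpow_const (Or.inl ha.ne')
    have hslope := hasDerivAt_iff_tendsto_slope.mp hg
    have hT : Tendsto (fun u : ℝ => u ^ ρ - 1) (𝓝[>] (0:ℝ)) atTop := by
      have h1 : Tendsto (fun u : ℝ => u ^ ρ) (𝓝[>] (0:ℝ)) atTop := by
        have h2 := (tendsto_rpow_atTop (show (0:ℝ) < -ρ by linarith)).comp
          tendsto_inv_nhdsGT_zero
        refine h2.congr' ?_
        filter_upwards [self_mem_nhdsWithin] with u hu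
        simp only [Function.comp_apply]
        rw [Real.inv_rpow (le_of_lt hu), Real.rpow_neg (le_of_lt hu), inv_inv]
      simpa [sub_eq_add_neg] using tendsto_atTop_add_const_right (𝓝[>] (0:ℝ)) (-1) h1
    have hct : Tendsto (fun u : ℝ => c / (u ^ ρ - 1)) (𝓝[>] (0:ℝ)) (𝓝 0) :=
      tendsto_const_nhds.div_atTop hT
    have hb : Tendsto (fun u : ℝ => a + c / (u ^ ρ - 1)) (𝓝[>] (0:ℝ)) (𝓝[≠] a) := by
      rw [tendsto_nhdsWithin_iff]
      constructor
      · have h0 : Tendsto (fun _ : ℝ => a) (𝓝[>] (0:ℝ)) (𝓝 a) := tendsto_const_nhds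
        simpa using h0.add hct
      · filter_upwards [hT.eventually_gt_atTop 0] with u hu
        simp only [mem_compl_iff, mem_singleton_iff]
        intro h
        have h2 : c / (u ^ ρ - 1) = 0 := by linarith
        rcases div_eq_zero_iff.mp h2 with h3 | h3
        · exact hc h3
        · exact hu.ne' h3
    have main : Tendsto (fun u : ℝ => c / γ * slope (fun s : ℝ => s ^ β) a
        (a + c / (u ^ ρ - 1))) (𝓝[>] (0:ℝ)) (𝓝 (c / γ * (β * a ^ (β - 1)))) :=
      (hslope.comp hb).const_mul (c / γ)
    have hval : c / γ * (β * a ^ (β - 1)) = -(x ^ ρ - 1) * x ^ (-γ - ρ) / ρ := by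
      have h1 : a ^ (β - 1) = x ^ (-γ - ρ) := by
        rw [ha_def, ← Real.rpow_mul hx.le]
        congr 1
        rw [hβ]
        field_simp
      rw [h1, hβ, hc_def, ha_def]
      field_simp
    rw [hval] at main
    refine Tendsto.congr' ?_ main
    have hδ : (0:ℝ) < min 1 x⁻¹ := lt_min one_pos (inv_pos.mpr hx)
    filter_upwards [Ioo_mem_nhdsGT_of_mem ⟨le_refl (0:ℝ), hδ⟩] with u hu
    obtain ⟨hu0, hu2⟩ := hu
    have hu1 : u < 1 := lt_of_lt_of_le hu2 (min_le_left _ _)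
    have hux : u * x < 1 := by
      have h1 : u < x⁻¹ := lt_of_lt_of_le hu2 (min_le_right _ _)
      calc u * x < x⁻¹ * x := by exact mul_lt_mul_of_pos_right h1 hx
        _ = 1 := inv_mul_cancel₀ hx.ne'
    have hux0 : 0 < u * x := mul_pos hu0 hx
    have ht1 : 1 < u ^ ρ := (Real.one_lt_rpow_iff_of_pos hu0).mpr (Or.inr ⟨hu1, hρ⟩)
    have ht : 0 < u ^ ρ - 1 := by linarith
    set t := u ^ ρ - 1 with htdef
    have hux1 : 1 < (u * x) ^ ρ := (Real.one_lt_rpow_iff_of_pos hux0).mpr (Or.inr ⟨hux, hρ⟩)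
    have hmul : (u * x) ^ ρ = u ^ ρ * a := Real.mul_rpow hu0.le hx.le
    have hspos : 0 < a + c / t := by
      have h1 : a + c / t = ((u * x) ^ ρ - 1) / t := by
        rw [hmul, hc_def, htdef]; field_simp [sub_ne_zero.mpr ht1.ne']; ring
      rw [h1]; exact div_pos (by linarith) ht
    have hQux : Q (u * x) = t ^ β * (a + c / t) ^ β := by
      rw [hQ (u * x) ⟨hux0, hux⟩]
      have h1 : (u * x) ^ ρ - 1 = t * (a + c / t) := by
        rw [hmul, hc_def, htdef]; field_simp [sub_ne_zero.mpr ht1.ne']; ring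
      rw [h1, Real.mul_rpow ht.le hspos.le]
    have hQu : Q u = t ^ β := by rw [hQ u ⟨hu0, hu1⟩]
    have hxg : x ^ (-γ) = a ^ β := by
      rw [ha_def, ← Real.rpow_mul hx.le]
      congr 1
      rw [hβ]
      field_simp
    have htβ : (0:ℝ) < t ^ β := Real.rpow_pos_of_pos ht β
    rw [hQux, hQu, hxg, slope_def_field]
    have hba : a + c / t - a = c / t := by ring
    rw [hba]
    field_simp
    ring
end

section
/- Let γ < 0 and ρ < 0, and define Q(u) = −(u^ρ − 1)^{−γ/ρ} for u ∈ (0,1) (the quantile function F^{-1}(1−u) of the reversed Burr distribution F(y) = 1 − ((−y)^{−ρ/γ} + 1)^{1/ρ}, y ≤ 0). Then for every x > 0: lim_{u→0⁺} u^ρ·( (Q(u) − Q(ux))/(γ·(u^ρ − 1)^{−γ/ρ}) − (x^{−γ} − 1)/γ ) = −x^{−γ}(1 − x^{−ρ})/ρ (the expression being taken for u small enough that ux ∈ (0,1)). -/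
open Filter Topology Set

/-- Second order condition for the reversed Burr distribution quantile function. -/
theorem reversed_burr_second_order
    (γ ρ : ℝ) (hγ : γ < 0) (hρ : ρ < 0)
    (Q : ℝ → ℝ) (hQ : ∀ u ∈ Set.Ioo (0:ℝ) 1, Q u = -((u ^ ρ - 1) ^ (-γ / ρ)))
    (x : ℝ) (hx : 0 < x) :
    Tendsto (fun u => u ^ ρ *
        ((Q u - Q (u * x)) / (γ * (u ^ ρ - 1) ^ (-γ / ρ)) - (x ^ (-γ) - 1) / γ))
      (𝓝[>] 0) (𝓝 (-(x ^ (-γ)) * (1 - x ^ (-ρ)) / ρ)) := by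
  have hρ0 : ρ ≠ 0 := ne_of_lt hρ
  have hγ0 : γ ≠ 0 := ne_of_lt hγ
  have hxρ : (0:ℝ) < x ^ ρ := Real.rpow_pos_of_pos hx ρ
  set c : ℝ := -γ / ρ with hc
  set g : ℝ → ℝ := fun v => ((x ^ ρ - v) / (1 - v)) ^ c with hg
  -- derivative of g at 0
  have hf : HasDerivAt (fun v : ℝ => (x ^ ρ - v) / (1 - v)) (x ^ ρ - 1) 0 := by
    have h1 : HasDerivAt (fun v : ℝ => x ^ ρ - v) (-1) 0 := by
      simpa using (hasDerivAt_id (0:ℝ)).const_sub (x ^ ρ)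
    have h2 : HasDerivAt (fun v : ℝ => 1 - v) (-1) 0 := by
      simpa using (hasDerivAt_id (0:ℝ)).const_sub (1:ℝ)
    have := h1.div h2 (by norm_num)
    refine this.congr_deriv ?_
    ring
  set D : ℝ := (x ^ ρ - 1) * c * (x ^ ρ) ^ (c - 1) with hD
  have hgd : HasDerivAt g D 0 := by
    have hne : ((x ^ ρ - (0:ℝ)) / (1 - 0)) ≠ 0 := by
      simp [ne_of_gt hxρ]
    have h := hf.rpow_const (p := c) (Or.inl hne)
    simpa [hg, hD] using h
  have hslope : Tendsto (fun v => (g v - g 0) / v) (𝓝[>] (0:ℝ)) (𝓝 D) := by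
    have := (hasDerivAt_iff_tendsto_slope.mp hgd).mono_left
      (nhdsWithin_mono _ (fun y hy => ne_of_gt hy))
    refine this.congr fun v => ?_
    simp [slope_def_field]
  -- u ↦ u ^ (-ρ) tends to 0⁺
  have hcomp : Tendsto (fun u : ℝ => u ^ (-ρ)) (𝓝[>] (0:ℝ)) (𝓝[>] (0:ℝ)) := by
    rw [tendsto_nhdsWithin_iff]
    constructor
    · have hcont := (Real.continuousAt_rpow_const 0 (-ρ) (Or.inr (le_of_lt (neg_pos.mpr hρ))))
      have h0 : (0:ℝ) ^ (-ρ) = 0 := Real.zero_rpow (ne_of_gt (neg_pos.mpr hρ))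
      have h' : Tendsto (fun u : ℝ => u ^ (-ρ)) (𝓝[>] (0:ℝ)) (𝓝 ((0:ℝ) ^ (-ρ))) :=
        hcont.tendsto.mono_left nhdsWithin_le_nhds
      rwa [h0] at h'
    · filter_upwards [self_mem_nhdsWithin] with u hu
      exact Real.rpow_pos_of_pos hu _
  have hmain : Tendsto (fun u : ℝ => ((g (u ^ (-ρ)) - g 0) / (u ^ (-ρ))) / γ)
      (𝓝[>] (0:ℝ)) (𝓝 (D / γ)) :=
    ((hslope.comp hcomp)).div_const γ
  -- identify the limit value
  have h1 : (x ^ ρ) ^ (c - 1) = x ^ (-γ - ρ) := by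
    rw [← Real.rpow_mul hx.le]
    congr 1
    rw [hc]; field_simp
  have h2 : x ^ (-γ - ρ) * x ^ ρ = x ^ (-γ) := by
    rw [← Real.rpow_add hx]; ring_nf
  have h3 : x ^ (-γ) * x ^ (-ρ) = x ^ (-γ - ρ) := by
    rw [← Real.rpow_add hx]; ring_nf
  have key : x ^ (-γ) * (1 - x ^ (-ρ)) = x ^ (-γ - ρ) * (x ^ ρ - 1) := by
    rw [mul_sub, mul_one, h3, mul_sub, mul_one, h2]
  have hDγ : D / γ = -(x ^ (-γ)) * (1 - x ^ (-ρ)) / ρ := by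
    have hkey' : -(x ^ (-γ)) * (1 - x ^ (-ρ)) = -(x ^ (-γ - ρ) * (x ^ ρ - 1)) := by
      rw [neg_mul, key]
    rw [hD, h1, hc, hkey']
    field_simp
  rw [← hDγ]
  refine hmain.congr' ?_
  have hmem : Set.Ioo (0:ℝ) (min 1 x⁻¹) ∈ 𝓝[>] (0:ℝ) :=
    Ioo_mem_nhdsGT_of_mem (by constructor <;> [rfl; positivity])
  filter_upwards [hmem] with u hu
  obtain ⟨hu0, hu1⟩ := hu
  have hu1' : u < 1 := lt_of_lt_of_le hu1 (min_le_left _ _)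
  have hux : u * x < 1 := by
    have h : u < x⁻¹ := lt_of_lt_of_le hu1 (min_le_right _ _)
    calc u * x < x⁻¹ * x := by apply mul_lt_mul_of_pos_right h hx
    _ = 1 := inv_mul_cancel₀ (ne_of_gt hx)
  have hux0 : 0 < u * x := mul_pos hu0 hx
  have huρ : 1 < u ^ ρ := Real.one_lt_rpow_iff_of_pos hu0 |>.mpr (Or.inr ⟨hu1', hρ⟩)
  have huxρ : 1 < (u * x) ^ ρ := Real.one_lt_rpow_iff_of_pos hux0 |>.mpr (Or.inr ⟨hux, hρ⟩)
  have hA : (0:ℝ) < (u ^ ρ - 1) ^ c := Real.rpow_pos_of_pos (by linarith) c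
  have hQu : Q u = -((u ^ ρ - 1) ^ c) := hQ u ⟨hu0, hu1'⟩
  have hQux : Q (u * x) = -(((u * x) ^ ρ - 1) ^ c) := hQ (u * x) ⟨hux0, hux⟩
  have hv0 : (0:ℝ) < u ^ (-ρ) := Real.rpow_pos_of_pos hu0 _
  have hvinv : u ^ (-ρ) = (u ^ ρ)⁻¹ := Real.rpow_neg hu0.le ρ
  have huρ0 : (0:ℝ) < u ^ ρ := Real.rpow_pos_of_pos hu0 ρ
  have hvlt : u ^ (-ρ) < 1 := by
    rw [hvinv]; exact inv_lt_one_of_one_lt₀ huρ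
  have hinv : (u ^ ρ)⁻¹ * u ^ ρ = 1 := inv_mul_cancel₀ huρ0.ne'
  -- rewrite g (u ^ (-ρ))
  have hfrac : (x ^ ρ - u ^ (-ρ)) / (1 - u ^ (-ρ)) = ((u * x) ^ ρ - 1) / (u ^ ρ - 1) := by
    rw [Real.mul_rpow hu0.le hx.le, hvinv]
    rw [div_eq_div_iff (by rw [← hvinv]; linarith) (by linarith)]
    ring_nf
    linear_combination (x ^ ρ - 1) * hinv
  have hgv : g (u ^ (-ρ)) = ((u * x) ^ ρ - 1) ^ c / (u ^ ρ - 1) ^ c := by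
    rw [hg]
    simp only
    rw [hfrac, Real.div_rpow (by linarith) (by linarith)]
  have hg0 : g 0 = x ^ (-γ) := by
    rw [hg]
    simp only [sub_zero]
    rw [div_one, ← Real.rpow_mul hx.le]
    congr 1
    rw [hc]; field_simp
  -- final algebraic identity
  rw [hQu, hQux, hgv, hg0, hvinv]
  have hA' : (u ^ ρ - 1) ^ c ≠ 0 := ne_of_gt hA
  field_simp
  ring
end

section
/- Let a > 0, b > 0, c > 0, and define Q(u) = −(1/b)·log a − (1/(bc))·log u + (1/b)·log(1 − u^{1/c}) for u ∈ (0,1) (the quantile function G^{-1}(1−u) = log F^{-1}(1−u) of the log Singh-Maddala distribution, where F(y) = 1 − (1 + a y^b)^{−c}). Then for every x > 0: lim_{u→0⁺} u^{−1/c}·( bc·(Q(ux) − Q(u)) + log x ) = −c·(x^{1/c} − 1) (the expression being taken for u small enough that ux ∈ (0,1)). -/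
open Filter Topology Set

lemma tendsto_log_one_sub_div :
    Tendsto (fun s : ℝ => Real.log (1 - s) / s) (𝓝[>] (0:ℝ)) (𝓝 (-1)) := by
  have hd : HasDerivAt (fun s : ℝ => Real.log (1 - s)) (-1) 0 := by
    have h1 : HasDerivAt (fun s : ℝ => 1 - s) (-1) 0 := by
      simpa using (hasDerivAt_id (0:ℝ)).const_sub 1
    have := h1.log (by norm_num)
    simpa using this
  have hs := hasDerivAt_iff_tendsto_slope.mp hd
  have hmono : 𝓝[>] (0:ℝ) ≤ 𝓝[≠] (0:ℝ) :=
    nhdsWithin_mono _ (fun y hy => ne_of_gt hy)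
  refine (hs.mono_left hmono).congr' ?_
  filter_upwards [self_mem_nhdsWithin] with s hs'
  simp [slope_def_field, div_eq_div_iff]

lemma tendsto_rpow_nhdsGT (c : ℝ) (hc : 0 < c) :
    Tendsto (fun u : ℝ => u ^ (1 / c)) (𝓝[>] (0:ℝ)) (𝓝[>] (0:ℝ)) := by
  rw [tendsto_nhdsWithin_iff]
  constructor
  · have hcont : ContinuousAt (fun u : ℝ => u ^ (1 / c)) 0 :=
      Real.continuousAt_rpow_const 0 (1 / c) (Or.inr (by positivity))
    have h0 : (0:ℝ) ^ (1 / c) = 0 := Real.zero_rpow (by positivity)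
    have h := hcont.tendsto.mono_left (nhdsWithin_le_nhds (s := Set.Ioi (0:ℝ)))
    rwa [h0] at h
  · filter_upwards [self_mem_nhdsWithin] with u hu
    exact Real.rpow_pos_of_pos hu _

/-- Second order condition for the log Singh-Maddala distribution quantile function. -/
theorem log_singh_maddala_second_order
    (a b c : ℝ) (ha : 0 < a) (hb : 0 < b) (hc : 0 < c)
    (Q : ℝ → ℝ)
    (hQ : ∀ u ∈ Set.Ioo (0:ℝ) 1,
      Q u = -(1 / b) * Real.log a - (1 / (b * c)) * Real.log u
            + (1 / b) * Real.log (1 - u ^ (1 / c)))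
    (x : ℝ) (hx : 0 < x) :
    Tendsto (fun u => u ^ (-(1 / c)) * (b * c * (Q (u * x) - Q u) + Real.log x))
      (𝓝[>] 0) (𝓝 (-c * (x ^ (1 / c) - 1))) := by
  have hb' := hb.ne'
  have hc' := hc.ne'
  -- limit of auxiliary function
  have hmul : Tendsto (fun u : ℝ => u * x) (𝓝[>] (0:ℝ)) (𝓝[>] (0:ℝ)) := by
    rw [tendsto_nhdsWithin_iff]
    constructor
    · have : Tendsto (fun u : ℝ => u * x) (𝓝 0) (𝓝 (0 * x)) :=
        (continuous_id.mul continuous_const).tendsto 0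
      simpa using this.mono_left nhdsWithin_le_nhds
    · filter_upwards [self_mem_nhdsWithin] with u hu
      exact mul_pos hu hx
  have h1 : Tendsto (fun u : ℝ => Real.log (1 - (u * x) ^ (1 / c)) / (u * x) ^ (1 / c))
      (𝓝[>] (0:ℝ)) (𝓝 (-1)) :=
    tendsto_log_one_sub_div.comp ((tendsto_rpow_nhdsGT c hc).comp hmul)
  have h2 : Tendsto (fun u : ℝ => Real.log (1 - u ^ (1 / c)) / u ^ (1 / c))
      (𝓝[>] (0:ℝ)) (𝓝 (-1)) :=
    tendsto_log_one_sub_div.comp (tendsto_rpow_nhdsGT c hc)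
  have hlim : Tendsto (fun u : ℝ => c * (Real.log (1 - (u * x) ^ (1 / c)) / (u * x) ^ (1 / c)
        * x ^ (1 / c) - Real.log (1 - u ^ (1 / c)) / u ^ (1 / c)))
      (𝓝[>] (0:ℝ)) (𝓝 (-c * (x ^ (1 / c) - 1))) := by
    have := ((h1.mul_const (x ^ (1 / c))).sub h2).const_mul c
    convert this using 2
    ring
  refine hlim.congr' ?_
  have hε : (0:ℝ) < min 1 x⁻¹ := lt_min one_pos (by positivity)
  filter_upwards [Ioo_mem_nhdsGT_of_mem (Set.left_mem_Ico.mpr hε)] with u hu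
  obtain ⟨hu0, hu1⟩ := hu
  have hu1' : u < 1 := lt_of_lt_of_le hu1 (min_le_left _ _)
  have hux1 : u * x < 1 := by
    have : u < x⁻¹ := lt_of_lt_of_le hu1 (min_le_right _ _)
    calc u * x < x⁻¹ * x := by exact mul_lt_mul_of_pos_right this hx
    _ = 1 := inv_mul_cancel₀ hx.ne'
  have hux0 : 0 < u * x := mul_pos hu0 hx
  rw [hQ u ⟨hu0, hu1'⟩, hQ (u * x) ⟨hux0, hux1⟩]
  have hlog : Real.log (u * x) = Real.log u + Real.log x := Real.log_mul hu0.ne' hx.ne'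
  have hrpow : (u * x) ^ (1 / c) = u ^ (1 / c) * x ^ (1 / c) :=
    Real.mul_rpow hu0.le hx.le
  have hup : (0:ℝ) < u ^ (1 / c) := Real.rpow_pos_of_pos hu0 _
  have huxp : (0:ℝ) < (u * x) ^ (1 / c) := Real.rpow_pos_of_pos hux0 _
  have huneg : u ^ (-(1 / c)) = (u ^ (1 / c))⁻¹ := by
    rw [Real.rpow_neg hu0.le]
  rw [hlog, huneg]
  field_simp
  rw [hrpow]
  ring
end

section
/- Let a > 0, b > 0, c > 0, and define Q(u) = ((u^{−1/c} − 1)/a)^{1/b} for u ∈ (0,1) (the quantile function F^{-1}(1−u) of the Singh-Maddala distribution F(y) = 1 − (1 + a y^b)^{−c}, y ≥ 0). Then for every x > 0: lim_{u→0⁺} (u^{−1/c} − 1)·( bc·(Q(ux) − Q(u))/Q(u) − bc·(x^{−1/(bc)} − 1) ) = c·(x^{−1/c} − 1)·x^{−1/(bc) + 1/c} (the expression being taken for u small enough that ux ∈ (0,1)). -/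
open Filter Topology Set

/-- Second order condition for the Singh-Maddala distribution quantile function. -/
theorem singh_maddala_second_order
    (a b c : ℝ) (ha : 0 < a) (hb : 0 < b) (hc : 0 < c)
    (Q : ℝ → ℝ)
    (hQ : ∀ u ∈ Set.Ioo (0:ℝ) 1, Q u = ((u ^ (-(1 / c)) - 1) / a) ^ (1 / b))
    (x : ℝ) (hx : 0 < x) :
    Tendsto (fun u => (u ^ (-(1 / c)) - 1) *
        (b * c * (Q (u * x) - Q u) / Q u - b * c * (x ^ (-(1 / (b * c))) - 1)))
      (𝓝[>] 0)
      (𝓝 (c * (x ^ (-(1 / c)) - 1) * x ^ (-(1 / (b * c)) + 1 / c))) := by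
  rcases eq_or_ne x 1 with hx1 | hx1
  · subst hx1
    simp only [mul_one, sub_self, mul_zero, zero_div, Real.one_rpow, zero_sub,
      neg_zero, sub_zero]
    exact tendsto_const_nhds
  -- main case x ≠ 1
  set t0 : ℝ := x ^ (-(1 / c)) with ht0def
  have ht0 : 0 < t0 := Real.rpow_pos_of_pos hx _
  have ht0ne : t0 ≠ 1 := by
    intro h
    apply hx1
    have h2 := congrArg (fun y : ℝ => y ^ (-c)) h
    simp only [ht0def] at h2
    rw [← Real.rpow_mul hx.le, Real.one_rpow] at h2
    have : -(1 / c) * -c = 1 := by field_simp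
    rw [this, Real.rpow_one] at h2
    exact h2
  have ht0m : t0 - 1 ≠ 0 := sub_ne_zero.mpr ht0ne
  set ε : ℝ → ℝ := fun u => (t0 - 1) / (u ^ (-(1 / c)) - 1) with hεdef
  -- eventual membership
  have hmem : ∀ᶠ u in 𝓝[>] (0:ℝ), u ∈ Ioo (0:ℝ) (min 1 x⁻¹) :=
    Ioo_mem_nhdsGT_of_mem ⟨le_refl 0, lt_min one_pos (inv_pos.mpr hx)⟩
  -- T tends to atTop
  have hTtop : Tendsto (fun u : ℝ => u ^ (-(1 / c)) - 1) (𝓝[>] (0:ℝ)) atTop := by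
    apply tendsto_atTop_add_const_right
    have h1 : Tendsto (fun u : ℝ => u ^ (1 / c)) (𝓝[>] (0:ℝ)) (𝓝[>] (0:ℝ)) := by
      rw [tendsto_nhdsWithin_iff]
      constructor
      · have hcont : ContinuousAt (fun u : ℝ => u ^ (1 / c)) 0 :=
          Real.continuousAt_rpow_const 0 (1 / c) (Or.inr (by positivity))
        have := hcont.continuousWithinAt (s := Ioi (0:ℝ)) |>.tendsto
        rwa [Real.zero_rpow (by positivity : (1:ℝ)/c ≠ 0)] at this
      · filter_upwards [self_mem_nhdsWithin] with u hu
        exact Real.rpow_pos_of_pos hu _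
    have h2 := tendsto_inv_nhdsGT_zero.comp h1
    apply h2.congr'
    filter_upwards [self_mem_nhdsWithin] with u hu
    simp only [Function.comp_apply]
    rw [← Real.rpow_neg (le_of_lt hu)]
  have hε0 : Tendsto ε (𝓝[>] (0:ℝ)) (𝓝 0) := tendsto_const_nhds.div_atTop hTtop
  -- for u in the eventual set, basic facts
  have hfacts : ∀ u ∈ Ioo (0:ℝ) (min 1 x⁻¹), 0 < u ∧ u < 1 ∧ u * x < 1 ∧
      0 < u ^ (-(1 / c)) - 1 := by
    intro u hu
    obtain ⟨hu0, hu1'⟩ := hu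
    have hu1 : u < 1 := hu1'.trans_le (min_le_left _ _)
    have hux : u * x < 1 := by
      have : u < x⁻¹ := hu1'.trans_le (min_le_right _ _)
      calc u * x < x⁻¹ * x := by apply mul_lt_mul_of_pos_right this hx
      _ = 1 := inv_mul_cancel₀ hx.ne'
    have hT : 1 < u ^ (-(1 / c)) := by
      rw [Real.one_lt_rpow_iff_of_pos hu0]
      right
      refine ⟨hu1, ?_⟩
      have : (0:ℝ) < 1 / c := by positivity
      linarith
    exact ⟨hu0, hu1, hux, sub_pos.mpr hT⟩
  have hεne : ∀ᶠ u in 𝓝[>] (0:ℝ), ε u ≠ 0 := by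
    filter_upwards [hmem] with u hu
    obtain ⟨_, _, _, hT⟩ := hfacts u hu
    exact div_ne_zero ht0m hT.ne'
  -- composition with slope
  have hd : HasDerivAt (fun t : ℝ => t ^ (1 / b)) ((1 / b) * t0 ^ (1 / b - 1)) t0 :=
    Real.hasDerivAt_rpow_const (Or.inl ht0.ne')
  have hslope := hasDerivAt_iff_tendsto_slope.mp hd
  have hcomp : Tendsto (fun u => t0 + ε u) (𝓝[>] (0:ℝ)) (𝓝[≠] t0) := by
    rw [tendsto_nhdsWithin_iff]
    constructor
    · have := (tendsto_const_nhds (α := ℝ) (x := t0) (f := 𝓝[>] (0:ℝ))).add hε0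
      simpa using this
    · filter_upwards [hεne] with u hu
      simp [hu]
  have hmain := (hslope.comp hcomp).const_mul (b * c * (t0 - 1))
  -- identify the limit value
  have hval : b * c * (t0 - 1) * ((1 / b) * t0 ^ (1 / b - 1)) =
      c * (x ^ (-(1 / c)) - 1) * x ^ (-(1 / (b * c)) + 1 / c) := by
    have h1 : t0 ^ (1 / b - 1) = x ^ (-(1 / (b * c)) + 1 / c) := by
      rw [ht0def, ← Real.rpow_mul hx.le]
      congr 1
      field_simp
      ring
    rw [h1, ht0def]
    field_simp
  rw [← hval]
  apply hmain.congr'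
  -- pointwise identity on the eventual set
  filter_upwards [hmem] with u hu
  obtain ⟨hu0, hu1, hux1, hT⟩ := hfacts u hu
  have hux0 : 0 < u * x := mul_pos hu0 hx
  have hTne : u ^ (-(1 / c)) - 1 ≠ 0 := hT.ne'
  have hεu : ε u ≠ 0 := div_ne_zero ht0m hTne
  have hQu : Q u = ((u ^ (-(1 / c)) - 1) / a) ^ (1 / b) := hQ u ⟨hu0, hu1⟩
  have hQux : Q (u * x) = (((u * x) ^ (-(1 / c)) - 1) / a) ^ (1 / b) :=
    hQ (u * x) ⟨hux0, hux1⟩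
  have hQupos : 0 < Q u := by
    rw [hQu]; exact Real.rpow_pos_of_pos (div_pos hT ha) _
  have hmulr : (u * x) ^ (-(1 / c)) = u ^ (-(1 / c)) * t0 := by
    rw [ht0def, Real.mul_rpow hu0.le hx.le]
  have hT'pos : 0 < (u * x) ^ (-(1 / c)) - 1 := by
    have h := hfacts u hu  -- not directly; derive
    have : 1 < (u * x) ^ (-(1 / c)) := by
      rw [Real.one_lt_rpow_iff_of_pos hux0]
      right
      refine ⟨hux1, ?_⟩
      have : (0:ℝ) < 1 / c := by positivity
      linarith
    linarith
  -- ratio identity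
  have hcongr : ((u * x) ^ (-(1 / c)) - 1) / a =
      (u ^ (-(1 / c)) - 1) / a * (t0 + ε u) := by
    rw [hmulr]
    have halg : ∀ T : ℝ, T ≠ 0 → ((T + 1) * t0 - 1) / a = T / a * (t0 + (t0 - 1) / T) := by
      intro T hT'
      field_simp
      ring
    have h2 := halg (u ^ (-(1 / c)) - 1) hTne
    rw [sub_add_cancel] at h2
    exact h2
  have hpos : 0 < t0 + ε u := by
    have h3 : t0 + ε u = (((u * x) ^ (-(1 / c)) - 1) / a) / ((u ^ (-(1 / c)) - 1) / a) := by
      rw [hcongr, mul_div_cancel_left₀ _ (ne_of_gt (div_pos hT ha))]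
    rw [h3]
    exact div_pos (div_pos hT'pos ha) (div_pos hT ha)
  have hratio : Q (u * x) = Q u * (t0 + ε u) ^ (1 / b) := by
    rw [hQu, hQux, hcongr, Real.mul_rpow (by positivity) hpos.le]
  -- x ^ (-(1/(b*c))) = t0 ^ (1/b)
  have hxbc : x ^ (-(1 / (b * c))) = t0 ^ (1 / b) := by
    rw [ht0def, ← Real.rpow_mul hx.le]
    congr 1
    field_simp
  simp only [Function.comp_apply, slope_def_field]
  rw [hxbc, hratio, add_sub_cancel_left]
  set A : ℝ := (t0 + ε u) ^ (1 / b) with hA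
  set B : ℝ := t0 ^ (1 / b) with hB
  have h5 : b * c * (Q u * A - Q u) / Q u = b * c * (A - 1) := by
    rw [show Q u * A - Q u = Q u * (A - 1) from by ring, mul_div_assoc,
      mul_div_cancel_left₀ _ hQupos.ne']
  have h6 : (A - B) / ε u * ε u = A - B := div_mul_cancel₀ _ hεu
  have hrel : ε u * (u ^ (-(1 / c)) - 1) = t0 - 1 := div_mul_cancel₀ _ hTne
  rw [h5]
  linear_combination (-(b * c * ((A - B) / ε u))) * hrel +
    (b * c * (u ^ (-(1 / c)) - 1)) * h6
end

section
/- Let Φ(y) = (2π)^{−1/2} ∫_{−∞}^{y} e^{−t²/2} dt be the standard normal distribution function, and let q : (0,1) → ℝ be any function satisfying Φ(q(s)) = 1 − s for all s ∈ (0,1). Then lim_{s→0⁺} ( q(s)² − 2·log(1/s) + log log(1/s) + log(4π) ) = 0; equivalently, q(s) = (2 log(1/s))^{1/2}·( 1 − ( (1/2)log(4π) + (1/2)log log(1/s) + o(1) ) / (2 log(1/s)) ) as s → 0⁺. -/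
open Filter Topology Set MeasureTheory Real

lemma sq_half_atBot : Tendsto (fun t : ℝ => -t ^ 2 / 2) atTop atBot := by
  have h1 : Tendsto (fun t : ℝ => t ^ 2 / 2) atTop atTop :=
    (tendsto_pow_atTop two_ne_zero).atTop_div_const (by norm_num)
  have := tendsto_neg_atTop_atBot.comp h1
  exact this.congr fun t => by simp [Function.comp]; ring

lemma gauss_exp_tendsto : Tendsto (fun t : ℝ => Real.exp (-t ^ 2 / 2)) atTop (𝓝 0) :=
  Real.tendsto_exp_atBot.comp sq_half_atBot

lemma gauss_upper_exact (y : ℝ) (hy : 0 < y) :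
    ∫ t in Set.Ioi y, t * Real.exp (-t ^ 2 / 2) = Real.exp (-y ^ 2 / 2) := by
  have hderiv : ∀ x ∈ Set.Ici y, HasDerivAt (fun t : ℝ => -Real.exp (-t ^ 2 / 2))
      (x * Real.exp (-x ^ 2 / 2)) x := by
    intro x _
    have h1 : HasDerivAt (fun t : ℝ => -t ^ 2 / 2) (-x) x := by
      have := ((hasDerivAt_pow 2 x).neg).div_const 2
      refine this.congr_deriv ?_
      simp; ring
    have := (Real.hasDerivAt_exp _).comp x h1
    have h2 := this.neg
    refine h2.congr_deriv ?_
    ring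
  have := integral_Ioi_of_hasDerivAt_of_nonneg' hderiv
    (fun x hx => mul_nonneg (le_of_lt (hy.trans hx)) (Real.exp_pos _).le)
    (gauss_exp_tendsto.neg)
  rw [this]; ring_nf

noncomputable def gaussTail (y : ℝ) : ℝ := ∫ t in Set.Ioi y, Real.exp (-t ^ 2 / 2)

lemma gauss_integrable : Integrable (fun t : ℝ => Real.exp (-t ^ 2 / 2)) := by
  have := integrable_exp_neg_mul_sq (b := (1/2 : ℝ)) (by norm_num)
  convert this using 2 with t
  ring_nf

lemma gauss_total : ∫ t : ℝ, Real.exp (-t ^ 2 / 2) = Real.sqrt (2 * Real.pi) := by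
  have := integral_gaussian (1/2 : ℝ)
  rw [show (Real.pi / (1/2)) = 2 * Real.pi by ring] at this
  rw [← this]
  congr 1 with t
  ring_nf

lemma gauss_lower_exact (y : ℝ) (hy : 2 ≤ y) :
    ∫ t in Set.Ioi y, (1 - 3 * t⁻¹ ^ 4) * Real.exp (-t ^ 2 / 2)
      = (y⁻¹ - y⁻¹ ^ 3) * Real.exp (-y ^ 2 / 2) := by
  have hderiv : ∀ x ∈ Set.Ici y, HasDerivAt
      (fun t : ℝ => (t⁻¹ ^ 3 - t⁻¹) * Real.exp (-t ^ 2 / 2))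
      ((1 - 3 * x⁻¹ ^ 4) * Real.exp (-x ^ 2 / 2)) x := by
    intro x hx
    have hx0 : x ≠ 0 := by intro h; rw [h] at hx; simp at hx; linarith
    have hinv : HasDerivAt (fun t : ℝ => t⁻¹) (-(x⁻¹ ^ 2)) x := by
      simpa using hasDerivAt_inv hx0
    have hu : HasDerivAt (fun t : ℝ => t⁻¹ ^ 3 - t⁻¹)
        (3 * x⁻¹ ^ 2 * (-(x⁻¹ ^ 2)) - (-(x⁻¹ ^ 2))) x := by
      have := ((hinv.pow 3).sub hinv)
      refine this.congr_deriv (by norm_num)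
    have he : HasDerivAt (fun t : ℝ => Real.exp (-t ^ 2 / 2))
        (Real.exp (-x ^ 2 / 2) * (-x)) x := by
      have h1 : HasDerivAt (fun t : ℝ => -t ^ 2 / 2) (-x) x := by
        have := ((hasDerivAt_pow 2 x).neg).div_const 2
        refine this.congr_deriv ?_
        simp; ring
      exact (Real.hasDerivAt_exp _).comp x h1
    have := hu.mul he
    refine this.congr_deriv ?_
    field_simp
    ring
  have hF : Tendsto (fun t : ℝ => (t⁻¹ ^ 3 - t⁻¹) * Real.exp (-t ^ 2 / 2)) atTop (𝓝 0) := by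
    have h1 : Tendsto (fun t : ℝ => t⁻¹ ^ 3 - t⁻¹) atTop (𝓝 0) := by
      have hi : Tendsto (fun t : ℝ => t⁻¹) atTop (𝓝 0) := tendsto_inv_atTop_zero
      have := (hi.pow 3).sub hi
      simpa using this
    have := h1.mul gauss_exp_tendsto
    simpa using this
  have hpos : ∀ x ∈ Set.Ioi y, 0 ≤ (1 - 3 * x⁻¹ ^ 4) * Real.exp (-x ^ 2 / 2) := by
    intro x hx
    have hx2 : (2:ℝ) ≤ x := le_of_lt (lt_of_le_of_lt hy hx)
    have hx0 : 0 < x := by linarith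
    have : x⁻¹ ≤ 2⁻¹ := by
      apply inv_anti₀ (by norm_num) hx2
    have h4 : x⁻¹ ^ 4 ≤ 2⁻¹ ^ 4 := by
      apply pow_le_pow_left₀ (inv_nonneg.mpr hx0.le) this
    have : 3 * x⁻¹ ^ 4 ≤ 3 * (1/16 : ℝ) := by rw [show ((2:ℝ)⁻¹ ^ 4) = 1/16 by norm_num] at h4; linarith
    apply mul_nonneg (by linarith) (Real.exp_pos _).le
  have := integral_Ioi_of_hasDerivAt_of_nonneg' hderiv hpos hF
  rw [this]; ring

lemma gaussTail_le (y : ℝ) (hy : 0 < y) :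
    gaussTail y ≤ Real.exp (-y ^ 2 / 2) / y := by
  have hderiv : ∀ x ∈ Set.Ici y, HasDerivAt (fun t : ℝ => -Real.exp (-t ^ 2 / 2))
      (x * Real.exp (-x ^ 2 / 2)) x := by
    intro x _
    have h1 : HasDerivAt (fun t : ℝ => -t ^ 2 / 2) (-x) x := by
      have := ((hasDerivAt_pow 2 x).neg).div_const 2
      refine this.congr_deriv ?_
      simp; ring
    have h2 := ((Real.hasDerivAt_exp _).comp x h1).neg
    refine h2.congr_deriv ?_
    ring
  have hpos : ∀ x ∈ Set.Ioi y, 0 ≤ x * Real.exp (-x ^ 2 / 2) :=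
    fun x hx => mul_nonneg (le_of_lt (hy.trans hx)) (Real.exp_pos _).le
  have hInt : IntegrableOn (fun t : ℝ => t * Real.exp (-t ^ 2 / 2)) (Set.Ioi y) :=
    integrableOn_Ioi_deriv_of_nonneg' hderiv hpos gauss_exp_tendsto.neg
  have hle : gaussTail y ≤ ∫ t in Set.Ioi y, y⁻¹ * (t * Real.exp (-t ^ 2 / 2)) := by
    apply integral_mono_of_nonneg
    · filter_upwards with t using (Real.exp_pos _).le
    · exact hInt.const_mul _
    · filter_upwards [ae_restrict_mem measurableSet_Ioi] with t ht
      have hty : y ≤ t := le_of_lt ht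
      have h1 : (1:ℝ) ≤ y⁻¹ * t := by
        rw [inv_mul_eq_div, le_div_iff₀ hy]; linarith
      calc Real.exp (-t ^ 2 / 2) = 1 * Real.exp (-t ^ 2 / 2) := by ring
        _ ≤ (y⁻¹ * t) * Real.exp (-t ^ 2 / 2) := by
            apply mul_le_mul_of_nonneg_right h1 (Real.exp_pos _).le
        _ = y⁻¹ * (t * Real.exp (-t ^ 2 / 2)) := by ring
  rw [MeasureTheory.integral_const_mul, gauss_upper_exact y hy] at hle
  calc gaussTail y ≤ y⁻¹ * Real.exp (-y ^ 2 / 2) := hle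
    _ = Real.exp (-y ^ 2 / 2) / y := by ring

lemma gaussTail_ge (y : ℝ) (hy : 2 ≤ y) :
    (y⁻¹ - y⁻¹ ^ 3) * Real.exp (-y ^ 2 / 2) ≤ gaussTail y := by
  rw [← gauss_lower_exact y hy]
  apply integral_mono_of_nonneg
  · filter_upwards [ae_restrict_mem measurableSet_Ioi] with t ht
    have hx2 : (2:ℝ) ≤ t := le_of_lt (lt_of_le_of_lt hy ht)
    have hx0 : 0 < t := by linarith
    have h1 : t⁻¹ ≤ 2⁻¹ := inv_anti₀ (by norm_num) hx2
    have h4 : t⁻¹ ^ 4 ≤ 2⁻¹ ^ 4 := pow_le_pow_left₀ (inv_nonneg.mpr hx0.le) h1 4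
    have : 3 * t⁻¹ ^ 4 ≤ 3 * (1/16 : ℝ) := by
      rw [show ((2:ℝ)⁻¹ ^ 4) = 1/16 by norm_num] at h4; linarith
    exact mul_nonneg (by linarith) (Real.exp_pos _).le
  · exact gauss_integrable.integrableOn
  · filter_upwards [ae_restrict_mem measurableSet_Ioi] with t ht
    have hx0 : 0 < t := by have := lt_of_le_of_lt hy ht; linarith
    have h1 : (1 - 3 * t⁻¹ ^ 4) ≤ 1 := by
      have : 0 ≤ 3 * t⁻¹ ^ 4 := by positivity
      linarith
    calc (1 - 3 * t⁻¹ ^ 4) * Real.exp (-t ^ 2 / 2)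
        ≤ 1 * Real.exp (-t ^ 2 / 2) := mul_le_mul_of_nonneg_right h1 (Real.exp_pos _).le
      _ = Real.exp (-t ^ 2 / 2) := by ring

lemma gaussTail_pos (y : ℝ) : 0 < gaussTail y := by
  rw [gaussTail]
  rw [setIntegral_pos_iff_support_of_nonneg_ae]
  · have : (Function.support fun t : ℝ => Real.exp (-t ^ 2 / 2)) = Set.univ := by
      ext t; simp [Function.support, (Real.exp_pos _).ne']
    rw [this, Set.univ_inter]
    simp [Real.volume_Ioi]
  · filter_upwards with t using (Real.exp_pos _).le
  · exact gauss_integrable.integrableOn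

noncomputable def deltaF (y : ℝ) : ℝ := Real.log (gaussTail y) + y ^ 2 / 2 + Real.log y

noncomputable def lamF (y : ℝ) : ℝ := 1/2 * Real.log (2 * Real.pi) - Real.log (gaussTail y)

lemma lamF_eq (y : ℝ) : lamF y = y ^ 2 / 2 + Real.log y + 1/2 * Real.log (2 * Real.pi) - deltaF y := by
  rw [lamF, deltaF]; ring

lemma deltaF_nonpos (y : ℝ) (hy : 2 ≤ y) : deltaF y ≤ 0 := by
  have hy0 : 0 < y := by linarith
  have h := gaussTail_le y hy0
  have hl := Real.log_le_log (gaussTail_pos y) h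
  rw [Real.log_div (Real.exp_pos _).ne' hy0.ne', Real.log_exp] at hl
  rw [deltaF]; linarith

lemma deltaF_lb (y : ℝ) (hy : 2 ≤ y) : Real.log (1 - y⁻¹ ^ 2) ≤ deltaF y := by
  have hy0 : 0 < y := by linarith
  have h := gaussTail_ge y hy
  have hrw : (y⁻¹ - y⁻¹ ^ 3) = y⁻¹ * (1 - y⁻¹ ^ 2) := by ring
  have hq : (0:ℝ) < 1 - y⁻¹ ^ 2 := by
    have h1 : y⁻¹ ≤ 2⁻¹ := inv_anti₀ (by norm_num) hy
    have h2 : y⁻¹ ^ 2 ≤ 2⁻¹ ^ 2 := pow_le_pow_left₀ (inv_nonneg.mpr hy0.le) h1 2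
    have : ((2:ℝ)⁻¹) ^ 2 = 1/4 := by norm_num
    linarith [this ▸ h2]
  have hpos : 0 < (y⁻¹ - y⁻¹ ^ 3) * Real.exp (-y ^ 2 / 2) := by
    rw [hrw]; positivity
  have hl := Real.log_le_log hpos h
  rw [hrw, Real.log_mul (by positivity) (Real.exp_pos _).ne',
    Real.log_mul (by positivity) hq.ne', Real.log_exp, Real.log_inv] at hl
  rw [deltaF]; linarith

lemma deltaF_tendsto : Tendsto deltaF atTop (𝓝 0) := by
  have hlow : Tendsto (fun y : ℝ => Real.log (1 - y⁻¹ ^ 2)) atTop (𝓝 0) := by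
    have h1 : Tendsto (fun y : ℝ => 1 - y⁻¹ ^ 2) atTop (𝓝 1) := by
      have := (tendsto_inv_atTop_zero.pow 2 : Tendsto (fun y:ℝ => y⁻¹ ^ 2) atTop (𝓝 (0^2)))
      have h2 := (tendsto_const_nhds (x := (1:ℝ)) (f := atTop)).sub this
      simpa using h2
    have := (Real.continuousAt_log one_ne_zero).tendsto.comp h1
    simpa [Function.comp_def] using this
  apply tendsto_of_tendsto_of_tendsto_of_le_of_le' hlow tendsto_const_nhds
  · filter_upwards [eventually_ge_atTop (2:ℝ)] with y hy using deltaF_lb y hy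
  · filter_upwards [eventually_ge_atTop (2:ℝ)] with y hy using deltaF_nonpos y hy

lemma lamF_pos (y : ℝ) (hy : 2 ≤ y) : 0 < lamF y := by
  have hy0 : (0:ℝ) < y := by linarith
  have hlog : 0 ≤ Real.log y := Real.log_nonneg (by linarith)
  have hlog2 : 0 ≤ Real.log (2 * Real.pi) :=
    Real.log_nonneg (by nlinarith [Real.pi_gt_three])
  have hd := deltaF_nonpos y hy
  rw [lamF_eq]
  nlinarith

set_option maxHeartbeats 1000000 in
lemma ratio_tendsto : Tendsto (fun y : ℝ => 2 * lamF y / y ^ 2) atTop (𝓝 1) := by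
  have h1 : Tendsto (fun y : ℝ => Real.log y / y ^ 2) atTop (𝓝 0) := by
    have hlo := isLittleO_log_rpow_atTop (show (0:ℝ) < 2 by norm_num)
    have hlo2 : Real.log =o[atTop] (fun x : ℝ => x ^ 2) := by
      apply hlo.congr' EventuallyEq.rfl
      filter_upwards with x
      rw [show ((2:ℝ)) = ((2:ℕ):ℝ) by norm_num, Real.rpow_natCast]
    exact hlo2.tendsto_div_nhds_zero
  have h2 : Tendsto (fun y : ℝ => Real.log (2 * Real.pi) / y ^ 2) atTop (𝓝 0) := by
    have : Tendsto (fun y : ℝ => (y ^ 2)⁻¹) atTop (𝓝 0) :=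
      (tendsto_pow_atTop two_ne_zero).inv_tendsto_atTop
    have := this.const_mul (Real.log (2 * Real.pi))
    simpa [div_eq_mul_inv] using this
  have h3 : Tendsto (fun y : ℝ => deltaF y / y ^ 2) atTop (𝓝 0) := by
    have hi : Tendsto (fun y : ℝ => (y ^ 2)⁻¹) atTop (𝓝 0) :=
      (tendsto_pow_atTop two_ne_zero).inv_tendsto_atTop
    have := deltaF_tendsto.mul hi
    simpa [div_eq_mul_inv] using this
  have hsum : Tendsto (fun y : ℝ => 1 + (2 * Real.log y / y ^ 2
      + Real.log (2 * Real.pi) / y ^ 2 - 2 * deltaF y / y ^ 2)) atTop (𝓝 1) := by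
    have := ((h1.const_mul 2).add h2).sub (h3.const_mul 2)
    have h4 := (tendsto_const_nhds (x := (1:ℝ)) (f := atTop)).add this
    simpa [mul_div_assoc] using h4
  apply hsum.congr'
  filter_upwards [eventually_gt_atTop (0:ℝ)] with y hy
  have hy2 : (y:ℝ) ^ 2 ≠ 0 := by positivity
  rw [lamF_eq]
  field_simp
  ring

lemma g_tendsto : Tendsto (fun y : ℝ => y ^ 2 - 2 * lamF y + Real.log (lamF y)
    + Real.log (4 * Real.pi)) atTop (𝓝 0) := by
  have hmain : Tendsto (fun y : ℝ => 2 * deltaF y + Real.log (2 * lamF y / y ^ 2))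
      atTop (𝓝 0) := by
    have hlog : Tendsto (fun y : ℝ => Real.log (2 * lamF y / y ^ 2)) atTop (𝓝 0) := by
      have := (Real.continuousAt_log one_ne_zero).tendsto.comp ratio_tendsto
      simpa [Function.comp_def] using this
    have := (deltaF_tendsto.const_mul 2).add hlog
    simpa using this
  apply hmain.congr'
  filter_upwards [eventually_ge_atTop (2:ℝ)] with y hy
  have hy0 : (0:ℝ) < y := by linarith
  have hlam := lamF_pos y hy
  have hpi := Real.pi_pos
  rw [Real.log_div (by positivity) (by positivity),
    Real.log_mul (by norm_num) hlam.ne', Real.log_pow,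
    show (4:ℝ) * Real.pi = 2 * (2 * Real.pi) by ring,
    Real.log_mul (by norm_num) (by positivity), lamF_eq]
  push_cast
  ring

lemma gaussTail_anti : Antitone gaussTail := by
  intro a b hab
  apply setIntegral_mono_set gauss_integrable.integrableOn
  · filter_upwards with t using (Real.exp_pos _).le
  · exact HasSubset.Subset.eventuallyLE (Set.Ioi_subset_Ioi hab)

/-- Asymptotic expansion of the standard normal upper quantile:
`q(s)² = 2 log(1/s) − log log(1/s) − log(4π) + o(1)` as `s → 0⁺`. -/
theorem normal_upper_quantile_expansion
    (Φ : ℝ → ℝ)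
    (hΦ : ∀ y : ℝ, Φ y = (2 * Real.pi) ^ (-(1/2) : ℝ) * ∫ t in Set.Iic y, Real.exp (-t ^ 2 / 2))
    (q : ℝ → ℝ)
    (hq : ∀ s ∈ Set.Ioo (0:ℝ) 1, Φ (q s) = 1 - s) :
    Tendsto (fun s => (q s) ^ 2 - 2 * Real.log (1 / s)
        + Real.log (Real.log (1 / s)) + Real.log (4 * Real.pi)) (𝓝[>] 0) (𝓝 0) := by
  set c : ℝ := (2 * Real.pi) ^ (-(1/2) : ℝ) with hc
  have hpi := Real.pi_pos
  have h2pi : (0:ℝ) < 2 * Real.pi := by linarith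
  have hcpos : 0 < c := Real.rpow_pos_of_pos h2pi _
  have hlogc : Real.log c = -(1/2) * Real.log (2 * Real.pi) := Real.log_rpow h2pi _
  -- tail identity
  have tail_eq : ∀ y : ℝ, 1 - Φ y = c * gaussTail y := by
    intro y
    have hsplit : (∫ t in Set.Iic y, Real.exp (-t ^ 2 / 2)) + gaussTail y
        = Real.sqrt (2 * Real.pi) := by
      rw [gaussTail, ← gauss_total]
      exact intervalIntegral.integral_Iic_add_Ioi gauss_integrable.integrableOn gauss_integrable.integrableOn
    have hc1 : c * Real.sqrt (2 * Real.pi) = 1 := by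
      rw [Real.sqrt_eq_rpow, hc, ← Real.rpow_add h2pi]
      norm_num
    rw [hΦ y]
    calc 1 - c * ∫ t in Set.Iic y, Real.exp (-t ^ 2 / 2)
        = c * Real.sqrt (2 * Real.pi) - c * ∫ t in Set.Iic y, Real.exp (-t ^ 2 / 2) := by
          rw [hc1]
      _ = c * gaussTail y := by rw [← hsplit]; ring
  -- s = c * gaussTail (q s) for s in Ioo 0 1
  have hs_eq : ∀ s ∈ Set.Ioo (0:ℝ) 1, s = c * gaussTail (q s) := by
    intro s hs
    have := tail_eq (q s)
    rw [hq s hs] at this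
    linarith
  -- q tends to atTop
  have hqtop : Tendsto q (𝓝[>] (0:ℝ)) atTop := by
    rw [tendsto_atTop]
    intro M
    set ε : ℝ := min 1 (c * gaussTail M) with hε
    have hεpos : 0 < ε := lt_min one_pos (mul_pos hcpos (gaussTail_pos M))
    filter_upwards [Ioo_mem_nhdsGT_of_mem (show (0:ℝ) ∈ Set.Ico 0 ε from ⟨le_refl _, hεpos⟩)]
      with s hsmem
    obtain ⟨hs0, hsε⟩ := hsmem
    have hs1 : s ∈ Set.Ioo (0:ℝ) 1 := ⟨hs0, lt_of_lt_of_le hsε (min_le_left _ _)⟩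
    have heq := hs_eq s hs1
    by_contra hcon
    push_neg at hcon
    have : c * gaussTail M ≤ c * gaussTail (q s) :=
      mul_le_mul_of_nonneg_left (gaussTail_anti hcon.le) hcpos.le
    have : c * gaussTail M ≤ s := by linarith
    have : ε ≤ s := le_trans (min_le_right _ _) this
    linarith
  -- log identity
  have hlog_eq : ∀ s ∈ Set.Ioo (0:ℝ) 1, Real.log (1 / s) = lamF (q s) := by
    intro s hs
    have h := hs_eq s hs
    have hlogs : Real.log s = Real.log c + Real.log (gaussTail (q s)) := by
      conv_lhs => rw [h]
      rw [Real.log_mul hcpos.ne' (gaussTail_pos _).ne']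
    rw [one_div, Real.log_inv, hlogs, hlogc, lamF]
    ring
  -- conclude
  have hg := g_tendsto.comp hqtop
  apply hg.congr'
  filter_upwards [Ioo_mem_nhdsGT_of_mem (show (0:ℝ) ∈ Set.Ico 0 1 from ⟨le_refl _, one_pos⟩)]
    with s hs
  simp only [Function.comp]
  rw [hlog_eq s hs]
end

section
/- Let Φ(y) = (2π)^{−1/2} ∫_{−∞}^{y} e^{−t²/2} dt be the standard normal distribution function, and let q : (0,1) → ℝ be any function satisfying Φ(q(s)) = 1 − s for all s ∈ (0,1). Then for every x > 0: lim_{s→0⁺} ( 4 log(1/s) / log log(1/s) )·( (2 log(1/s))^{1/2}·(q(s) − q(xs)) − log x ) = log x (the expression being taken for s small enough that xs ∈ (0,1)). -/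
set_option maxHeartbeats 1000000

open Filter Topology Set MeasureTheory

namespace NSO
noncomputable def gg (t : ℝ) : ℝ := Real.exp (-t^2/2)
lemma gg_pos (t : ℝ) : 0 < gg t := Real.exp_pos _
lemma integrable_gg : Integrable gg := by
  have : gg = fun t => Real.exp (-(1/2 : ℝ) * t^2) := by ext t; unfold gg; ring_nf
  rw [this]; exact integrable_exp_neg_mul_sq (by norm_num)
noncomputable def TT (y : ℝ) : ℝ := ∫ t in Ioi y, gg t

lemma gg_cont : Continuous gg := by
  unfold gg; fun_prop

lemma gg_tendsto : Tendsto gg atTop (𝓝 0) := by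
  apply Real.tendsto_exp_atBot.comp
  have h1 : Tendsto (fun t : ℝ => t^2/2) atTop atTop :=
    (tendsto_pow_atTop (by norm_num)).atTop_div_const (by norm_num)
  have h2 : Tendsto (fun t : ℝ => -(t^2/2)) atTop atBot := tendsto_neg_atTop_atBot.comp h1
  exact h2.congr (fun t => by ring)

lemma hasDerivAt_gg (t : ℝ) : HasDerivAt gg (gg t * (-t)) t := by
  have h1 : HasDerivAt (fun t : ℝ => -t^2/2) (-t) t := by
    have := ((hasDerivAt_pow 2 t).div_const 2).neg
    have e : (fun t : ℝ => -t^2/2) = -fun x => x^2/2 := by ext s; simp only [Pi.neg_apply]; ring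
    rw [e]; exact this.congr_deriv (by norm_num)
  exact h1.exp

lemma integral_mul_gg (y : ℝ) : ∫ t in Ioi y, t * gg t = gg y := by
  have hint : IntegrableOn (fun t => t * gg t) (Ioi y) := by
    have : (fun t : ℝ => t * gg t) = fun t => t * Real.exp (-(1/2:ℝ) * t^2) := by
      ext t; unfold gg; ring_nf
    rw [this]; exact (integrable_mul_exp_neg_mul_sq (by norm_num)).integrableOn
  have hderiv : ∀ t ∈ Ici y, HasDerivAt (fun t => -gg t) (t * gg t) t := by
    intro t _
    have := (hasDerivAt_gg t).neg
    exact this.congr_deriv (by ring)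
  have := integral_Ioi_of_hasDerivAt_of_tendsto' hderiv hint gg_tendsto.neg
  rw [this]; simp

lemma mills_upper {y : ℝ} (hy : 0 < y) : TT y ≤ gg y / y := by
  have hint : IntegrableOn (fun t => t * gg t) (Ioi y) := by
    have : (fun t : ℝ => t * gg t) = fun t => t * Real.exp (-(1/2:ℝ) * t^2) := by
      ext t; unfold gg; ring_nf
    rw [this]; exact (integrable_mul_exp_neg_mul_sq (by norm_num)).integrableOn
  have h1 : TT y ≤ ∫ t in Ioi y, (1/y) * (t * gg t) := by
    apply setIntegral_mono_on integrable_gg.integrableOn (hint.const_mul _) measurableSet_Ioi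
    intro t ht
    rw [mem_Ioi] at ht
    calc gg t = 1 * gg t := by ring
    _ ≤ (t/y) * gg t := by
        have h2 : (1:ℝ) ≤ t / y := (le_div_iff₀ hy).2 (by linarith)
        nlinarith [gg_pos t]
    _ = 1/y * (t * gg t) := by ring
  rw [integral_const_mul, integral_mul_gg] at h1
  calc TT y ≤ 1/y * gg y := h1
  _ = gg y / y := by ring

noncomputable def dd (t : ℝ) : ℝ := ((1 - 2*t^2 - t^4)/(t^2+1)^2) * gg t

lemma dd_abs_le (t : ℝ) : |dd t| ≤ gg t := by
  have h1 : (0:ℝ) < (t^2+1)^2 := by positivity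
  have hc : |(1 - 2*t^2 - t^4)/(t^2+1)^2| ≤ 1 := by
    rw [abs_div, abs_of_pos h1, div_le_one h1]
    rw [abs_le]; constructor <;> nlinarith [sq_nonneg t, sq_nonneg (t^2)]
  unfold dd
  rw [abs_mul, abs_of_pos (gg_pos t)]
  nlinarith [gg_pos t, abs_nonneg ((1 - 2*t^2 - t^4)/(t^2+1)^2)]

lemma hasDerivAt_G (t : ℝ) : HasDerivAt (fun t => t/(t^2+1) * gg t) (dd t) t := by
  have h1 : HasDerivAt (fun t : ℝ => t/(t^2+1))
      ((1*(t^2+1) - t*(2*t^1))/((t^2+1)^2)) t := by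
    have := (hasDerivAt_id t).div ((hasDerivAt_pow 2 t).add_const 1) (by positivity)
    exact this.congr_deriv (by simp only [id]; norm_num)
  have h2 := h1.mul (hasDerivAt_gg t)
  refine h2.congr_deriv ?_
  unfold dd gg
  have h3 : (t^2+1) ≠ 0 := by positivity
  field_simp
  ring

lemma dd_cont : Continuous dd := by
  unfold dd
  exact ((by continuity : Continuous fun t : ℝ => (1 - 2*t^2 - t^4)).div
    (by continuity) (fun t => by positivity)).mul gg_cont

lemma dd_integrable (y : ℝ) : IntegrableOn dd (Ioi y) := by
  apply Integrable.mono integrable_gg.integrableOn dd_cont.aestronglyMeasurable.restrict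
  apply ae_of_all
  intro t
  rw [Real.norm_eq_abs, Real.norm_eq_abs, abs_of_pos (gg_pos t)]
  exact dd_abs_le t

lemma mills_lower (y : ℝ) : y/(y^2+1) * gg y ≤ TT y := by
  have hG : Tendsto (fun t => t/(t^2+1) * gg t) atTop (𝓝 0) := by
    have hb : Tendsto (fun t : ℝ => t/(t^2+1)) atTop (𝓝 0) := by
      apply squeeze_zero' (g := fun t : ℝ => 1/t)
      · filter_upwards [eventually_gt_atTop (0:ℝ)] with t ht
        positivity
      · filter_upwards [eventually_gt_atTop (0:ℝ)] with t ht
        rw [div_le_div_iff₀ (by positivity) ht]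
        nlinarith
      · simpa [one_div] using tendsto_inv_atTop_zero
    simpa using hb.mul gg_tendsto
  have hFTC := integral_Ioi_of_hasDerivAt_of_tendsto' (f := fun t => t/(t^2+1) * gg t)
    (fun t _ => hasDerivAt_G t) (dd_integrable y) hG
  have h2 : ∫ t in Ioi y, (- dd t) = y/(y^2+1) * gg y := by
    rw [integral_neg, hFTC]; ring
  rw [← h2]
  apply setIntegral_mono_on ((dd_integrable y).neg) integrable_gg.integrableOn measurableSet_Ioi
  intro t _
  have := (abs_le.1 (dd_abs_le t)).1
  simp only [Pi.neg_apply]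
  linarith

lemma integral_gg : ∫ t : ℝ, gg t = Real.sqrt (2 * Real.pi) := by
  have h : ∫ t : ℝ, gg t = ∫ t : ℝ, Real.exp (-(1/2 : ℝ) * t^2) := by
    congr 1; ext t; unfold gg; ring_nf
  rw [h, integral_gaussian]
  rw [show Real.pi / (1/2 : ℝ) = 2 * Real.pi by ring]

lemma TT_pos (y : ℝ) : 0 < TT y := by
  refine setIntegral_pos_iff_support_of_nonneg_ae ?_ ?_ |>.2 ?_
  · exact Eventually.of_forall fun t => (gg_pos t).le
  · exact integrable_gg.integrableOn
  · have : (Function.support gg) = univ := by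
      ext t; simp [Function.support, (gg_pos t).ne']
    rw [this, univ_inter]
    simp [Real.volume_Ioi]

lemma TT_antitone : Antitone TT := by
  intro y z hyz
  exact setIntegral_mono_set integrable_gg.integrableOn
    (Eventually.of_forall fun t => (gg_pos t).le)
    (Eventually.of_forall fun t ht => lt_of_le_of_lt hyz ht)

lemma integral_Iic_gg (y : ℝ) : ∫ t in Iic y, Real.exp (-t^2/2) = Real.sqrt (2 * Real.pi) - TT y := by
  have h := intervalIntegral.integral_Iic_add_Ioi (b := y) (f := gg) (μ := volume)
    integrable_gg.integrableOn integrable_gg.integrableOn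
  rw [integral_gg] at h
  have h2 : ∫ t in Iic y, Real.exp (-t^2/2) = ∫ t in Iic y, gg t := rfl
  unfold TT
  rw [h2]
  linarith

lemma integral_gg' : True := trivial

noncomputable def LL (s : ℝ) : ℝ := Real.log (1/s)
noncomputable def ER (q : ℝ → ℝ) (s : ℝ) : ℝ :=
  2*LL s - (q s)^2 - 2*Real.log (q s) - Real.log (2*Real.pi)

lemma LL_top : Tendsto LL (𝓝[>](0:ℝ)) atTop := by
  have h1 : Tendsto (fun s : ℝ => Real.log s) (𝓝[>](0:ℝ)) atBot :=
    Real.tendsto_log_nhdsGT_zero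
  have := tendsto_neg_atBot_atTop.comp h1
  apply this.congr
  intro s
  simp [LL, Real.log_inv, one_div]

lemma logLL_top : Tendsto (fun s => Real.log (LL s)) (𝓝[>](0:ℝ)) atTop :=
  Real.tendsto_log_atTop.comp LL_top

section QF
variable {q : ℝ → ℝ}
  (hT : ∀ s ∈ Ioo (0:ℝ) 1, TT (q s) = s * Real.sqrt (2*Real.pi))

lemma mem_Ioo_ev : ∀ᶠ s in 𝓝[>](0:ℝ), s ∈ Ioo (0:ℝ) 1 :=
  Ioo_mem_nhdsGT one_pos

include hT in
lemma q_top : Tendsto q (𝓝[>](0:ℝ)) atTop := by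
  rw [tendsto_atTop]
  intro M
  have hTM : 0 < TT M := TT_pos M
  have hδ : 0 < min 1 (TT M / Real.sqrt (2*Real.pi)) := by
    apply lt_min one_pos
    positivity
  filter_upwards [Ioo_mem_nhdsGT hδ] with s hs
  have hs1 : s ∈ Ioo (0:ℝ) 1 := ⟨hs.1, lt_of_lt_of_le hs.2 (min_le_left _ _)⟩
  have h2 : s * Real.sqrt (2*Real.pi) < TT M := by
    have := lt_of_lt_of_le hs.2 (min_le_right _ _)
    rw [lt_div_iff₀ (by positivity)] at this
    linarith
  by_contra h
  push_neg at h
  have := TT_antitone h.le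
  rw [hT s hs1] at this
  linarith

include hT in
lemma er_bounds : ∀ᶠ s in 𝓝[>](0:ℝ), 0 ≤ ER q s ∧ ER q s ≤ 2/(q s)^2 := by
  filter_upwards [mem_Ioo_ev, (q_top hT).eventually (eventually_ge_atTop (1:ℝ))] with s hs ha
  set a := q s with hadef
  have ha0 : 0 < a := lt_of_lt_of_le one_pos ha
  have hTa : TT a = s * Real.sqrt (2*Real.pi) := hT s hs
  have hsπ : 0 < Real.sqrt (2*Real.pi) := by positivity
  have hlogs : Real.log (s * Real.sqrt (2*Real.pi)) =
      -LL s + Real.log (2*Real.pi) / 2 := by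
    rw [Real.log_mul (ne_of_gt hs.1) (ne_of_gt hsπ), Real.log_sqrt (by positivity)]
    simp [LL, one_div, Real.log_inv]
  have hlogg : Real.log (gg a) = -a^2/2 := by unfold gg; rw [Real.log_exp]
  constructor
  · -- from upper Mills
    have h1 : s * Real.sqrt (2*Real.pi) ≤ gg a / a := hTa ▸ mills_upper ha0
    have h2 := Real.log_le_log (mul_pos hs.1 hsπ) h1
    rw [hlogs, Real.log_div (ne_of_gt (gg_pos a)) (ne_of_gt ha0), hlogg] at h2
    unfold ER
    linarith
  · -- from lower Mills
    have h1 : a/(a^2+1) * gg a ≤ s * Real.sqrt (2*Real.pi) := hTa ▸ mills_lower a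
    have h2 := Real.log_le_log (mul_pos (div_pos ha0 (by positivity)) (gg_pos a)) h1
    rw [hlogs, Real.log_mul (ne_of_gt (div_pos ha0 (by positivity))) (ne_of_gt (gg_pos a)),
      Real.log_div (ne_of_gt ha0) (by positivity), hlogg] at h2
    have h3 : Real.log (a^2+1) - Real.log (a^2) ≤ 1/a^2 := by
      rw [← Real.log_div (by positivity) (by positivity)]
      have h4 := Real.log_le_sub_one_of_pos (show (0:ℝ) < (a^2+1)/a^2 by positivity)
      have h5 : (a^2+1)/a^2 - 1 = 1/a^2 := by field_simp; ring
      linarith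
    have h6 : Real.log (a^2) = 2 * Real.log a := by
      rw [show a^2 = a*a by ring, Real.log_mul (ne_of_gt ha0) (ne_of_gt ha0)]; ring
    unfold ER
    have : 2/a^2 = 2*(1/a^2) := by ring
    rw [this]
    linarith

include hT in
lemma sq_le : ∀ᶠ s in 𝓝[>](0:ℝ), (q s)^2 ≤ 2 * LL s := by
  filter_upwards [er_bounds hT, (q_top hT).eventually (eventually_ge_atTop (1:ℝ))] with s her ha
  have h1 : 0 ≤ Real.log (q s) := Real.log_nonneg ha
  have h2 : 0 ≤ Real.log (2*Real.pi) := Real.log_nonneg (by nlinarith [Real.pi_gt_three])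
  have := her.1
  unfold ER at this
  linarith

include hT in
lemma ge_sq : ∀ᶠ s in 𝓝[>](0:ℝ), 2*LL s - Real.log (2*LL s) - 4 ≤ (q s)^2 := by
  filter_upwards [er_bounds hT, sq_le hT,
    (q_top hT).eventually (eventually_ge_atTop (1:ℝ)),
    LL_top.eventually (eventually_ge_atTop (1:ℝ))] with s her hle ha hL
  have ha0 : 0 < q s := lt_of_lt_of_le one_pos ha
  have h1 : Real.log ((q s)^2) ≤ Real.log (2*LL s) :=
    Real.log_le_log (by positivity) hle
  have h6 : Real.log ((q s)^2) = 2 * Real.log (q s) := by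
    rw [show (q s)^2 = q s * q s by ring, Real.log_mul (ne_of_gt ha0) (ne_of_gt ha0)]; ring
  have h2 : Real.log (2*Real.pi) ≤ 2 := by
    have : (2*Real.pi) ≤ Real.exp 2 := by
      have he : Real.exp 2 = Real.exp 1 * Real.exp 1 := by
        rw [← Real.exp_add]; norm_num
      nlinarith [Real.pi_lt_d2, Real.exp_one_gt_d9, Real.exp_pos 1]
    calc Real.log (2*Real.pi) ≤ Real.log (Real.exp 2) :=
          Real.log_le_log (by positivity) this
    _ = 2 := Real.log_exp 2
  have h3 : ER q s ≤ 2 := by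
    have := her.2
    have : 2/(q s)^2 ≤ 2 := by
      rw [div_le_iff₀ (by positivity)]
      nlinarith
    linarith [her.2]
  have := her.1
  unfold ER at *
  linarith

lemma ev_log_small : ∀ᶠ u in (atTop : Filter ℝ), Real.log (2*u) + 4 ≤ u := by
  have h1 := Real.isLittleO_log_id_atTop.bound (c := 1/2) (by norm_num)
  filter_upwards [h1, eventually_ge_atTop (10:ℝ)] with u hu h10
  have h2 : Real.log (2*u) = Real.log 2 + Real.log u := by
    rw [Real.log_mul (by norm_num) (by positivity)]
  have h3 : Real.log u ≤ u/2 := by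
    have := hu
    rw [Real.norm_eq_abs, Real.norm_eq_abs, id] at this
    have h4 := le_abs_self (Real.log u)
    rw [abs_of_pos (by positivity : (0:ℝ) < u)] at this
    linarith
  have h5 : Real.log 2 ≤ 1 := by
    calc Real.log 2 ≤ 2 - 1 := Real.log_le_sub_one_of_pos (by norm_num)
    _ = 1 := by norm_num
  linarith

include hT in
lemma LL_le_sq : ∀ᶠ s in 𝓝[>](0:ℝ), LL s ≤ (q s)^2 := by
  filter_upwards [ge_sq hT, LL_top.eventually ev_log_small] with s h1 h2
  linarith

end QF

lemma aux_ratio : Tendsto (fun u : ℝ => (2*u - Real.log (2*u) - 4)/(2*u)) atTop (𝓝 1) := by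
  have h2u : Tendsto (fun u : ℝ => 2*u) atTop atTop :=
    Tendsto.const_mul_atTop two_pos tendsto_id
  have h_logdiv : Tendsto (fun u : ℝ => Real.log (2*u)/(2*u)) atTop (𝓝 0) :=
    (Real.isLittleO_log_id_atTop.tendsto_div_nhds_zero).comp h2u
  have h_inv : Tendsto (fun u : ℝ => 2/u) atTop (𝓝 0) := by
    have := tendsto_inv_atTop_zero (𝕜 := ℝ) |>.const_mul (2:ℝ)
    simpa [div_eq_mul_inv] using this
  have hcomb := (tendsto_const_nhds (x := (1:ℝ)) (f := atTop)).sub h_logdiv |>.sub h_inv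
  rw [show (1:ℝ) - 0 - 0 = 1 by ring] at hcomb
  apply hcomb.congr'
  filter_upwards [eventually_gt_atTop (0:ℝ)] with u hu
  field_simp
  ring

variable {q : ℝ → ℝ}
  (hT : ∀ s ∈ Ioo (0:ℝ) 1, TT (q s) = s * Real.sqrt (2*Real.pi))

include hT in
lemma ratio_sq : Tendsto (fun s => (q s)^2/(2*LL s)) (𝓝[>](0:ℝ)) (𝓝 1) := by
  apply tendsto_of_tendsto_of_tendsto_of_le_of_le'
    (g := fun s => (2*LL s - Real.log (2*LL s) - 4)/(2*LL s)) (h := fun _ => 1)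
    (aux_ratio.comp LL_top) tendsto_const_nhds
  · filter_upwards [ge_sq hT, LL_top.eventually (eventually_gt_atTop (0:ℝ))] with s h1 h2
    gcongr
  · filter_upwards [sq_le hT, LL_top.eventually (eventually_gt_atTop (0:ℝ))] with s h1 h2
    rw [div_le_one (by positivity)]
    exact h1

include hT in
lemma ratio : Tendsto (fun s => q s / Real.sqrt (2*LL s)) (𝓝[>](0:ℝ)) (𝓝 1) := by
  have h := (Real.continuous_sqrt.tendsto 1).comp (ratio_sq hT)
  rw [Real.sqrt_one] at h
  apply h.congr'
  filter_upwards [(q_top hT).eventually (eventually_ge_atTop (0:ℝ))] with s ha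
  simp only [Function.comp_apply]
  rw [Real.sqrt_div (by positivity), Real.sqrt_sq ha]

include hT in
lemma ratio_log : Tendsto (fun s => Real.log (q s) / Real.log (LL s)) (𝓝[>](0:ℝ)) (𝓝 (1/2)) := by
  have hR : Tendsto (fun s => Real.log ((q s)^2) / Real.log (LL s)) (𝓝[>](0:ℝ)) (𝓝 1) := by
    apply tendsto_of_tendsto_of_tendsto_of_le_of_le' (g := fun _ => (1:ℝ))
      (h := fun s => 1 + Real.log 2 / Real.log (LL s)) tendsto_const_nhds
    · have hinv : Tendsto (fun s => (Real.log (LL s))⁻¹) (𝓝[>](0:ℝ)) (𝓝 0) :=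
        tendsto_inv_atTop_zero.comp logLL_top
      have := (hinv.const_mul (Real.log 2)).const_add (1:ℝ)
      rw [show (1:ℝ) + Real.log 2 * 0 = 1 by ring] at this
      apply this.congr
      intro s
      rw [div_eq_mul_inv]
    · filter_upwards [LL_le_sq hT, LL_top.eventually (eventually_ge_atTop (2:ℝ))] with s h1 h2
      have hL0 : (0:ℝ) < LL s := by linarith
      have hlogL : 0 < Real.log (LL s) := Real.log_pos (by linarith)
      rw [le_div_iff₀ hlogL, one_mul]
      exact Real.log_le_log hL0 h1
    · filter_upwards [sq_le hT, LL_top.eventually (eventually_ge_atTop (2:ℝ)),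
        (q_top hT).eventually (eventually_ge_atTop (1:ℝ))] with s h1 h2 hq1
      have hq0 : (0:ℝ) < q s := lt_of_lt_of_le one_pos hq1
      have hL0 : (0:ℝ) < LL s := by linarith
      have hlogL : 0 < Real.log (LL s) := Real.log_pos (by linarith)
      have h3 : Real.log ((q s)^2) ≤ Real.log 2 + Real.log (LL s) := by
        calc Real.log ((q s)^2) ≤ Real.log (2 * LL s) :=
              Real.log_le_log (by positivity) h1
        _ = Real.log 2 + Real.log (LL s) := Real.log_mul (by norm_num) (ne_of_gt hL0)
      rw [div_le_iff₀ hlogL]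
      calc Real.log ((q s)^2) ≤ Real.log 2 + Real.log (LL s) := h3
      _ = (1 + Real.log 2/Real.log (LL s)) * Real.log (LL s) := by field_simp; ring
  have := hR.const_mul (1/2 : ℝ)
  rw [show (1/2 : ℝ) * 1 = 1/2 by ring] at this
  apply this.congr'
  filter_upwards [(q_top hT).eventually (eventually_ge_atTop (1:ℝ))] with s ha
  have ha0 : (0:ℝ) < q s := lt_of_lt_of_le one_pos ha
  have h6 : Real.log ((q s)^2) = 2 * Real.log (q s) := by
    rw [show (q s)^2 = q s * q s by ring, Real.log_mul (ne_of_gt ha0) (ne_of_gt ha0)]; ring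
  rw [h6]
  ring


lemma algF (L lg S A B lx : ℝ) (hS : S^2 = 2*L) (hS0 : 0 < S) (hA0 : 0 < A) (hB0 : 0 < B)
    (hlg : lg ≠ 0) :
    (4*L/lg) * (S*(A-B) - lx) =
      lx*((2*L-A^2)/lg * (2/((1+A/S)*(A/S+B/S)))) +
      lx*((2*L-B^2)/lg * (2/((1+B/S)*(A/S+B/S)))) +
      (4*L/lg)*S*((A^2-B^2-2*lx)/(A+B)) := by
  have hSA : S + A ≠ 0 := by positivity
  have hSB : S + B ≠ 0 := by positivity
  have hAB : A + B ≠ 0 := by positivity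
  have hL : L = S^2/2 := by linarith
  subst hL
  field_simp
  ring

lemma residue_bound (A B L lx la lb EA EB : ℝ)
    (hA1 : 1 ≤ A) (hB1 : 1 ≤ B) (hL : 8 ≤ L)
    (hLA : L ≤ A^2) (hBL : L/2 ≤ B^2)
    (hEA0 : 0 ≤ EA) (hEA : EA ≤ 2/A^2) (hEB0 : 0 ≤ EB) (hEB : EB ≤ 2/B^2)
    (hID : A^2 - B^2 = 2*lx + 2*(lb - la) + EB - EA)
    (hla1 : lb - la ≤ (B - A)/A) (hla2 : la - lb ≤ (A - B)/B) :
    |A^2 - B^2 - 2*lx| ≤ (8*|lx| + 18)/L ∧ Real.sqrt (2*L) ≤ A + B := by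
  have hL0 : (0:ℝ) < L := by linarith
  have hA0 : (0:ℝ) < A := by linarith
  have hB0 : (0:ℝ) < B := by linarith
  set S := Real.sqrt (2*L) with hSdef
  have hS2 : S^2 = 2*L := Real.sq_sqrt (by positivity)
  have hS0 : 0 < S := Real.sqrt_pos.2 (by positivity)
  have hSA : S ≤ 2*A := by
    have h1 : Real.sqrt (2*L) ≤ Real.sqrt ((2*A)^2) := Real.sqrt_le_sqrt (by nlinarith)
    rwa [Real.sqrt_sq (by positivity)] at h1
  have hSB : S ≤ 2*B := by
    have h1 : Real.sqrt (2*L) ≤ Real.sqrt ((2*B)^2) := Real.sqrt_le_sqrt (by nlinarith)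
    rwa [Real.sqrt_sq (by positivity)] at h1
  have hSAB : S ≤ A + B := by linarith
  have hS4 : 4 ≤ S := by
    have h1 : Real.sqrt (4^2) ≤ Real.sqrt (2*L) := Real.sqrt_le_sqrt (by nlinarith)
    rwa [Real.sqrt_sq (by norm_num)] at h1
  have hAB4 : 4 ≤ A + B := by linarith
  have hEAL : EA ≤ 2/L := le_trans hEA (by gcongr)
  have hEBL : EB ≤ 4/L := by
    have h : 2/B^2 ≤ 4/L := by
      rw [div_le_div_iff₀ (by positivity) hL0]; nlinarith
    linarith
  have hEA4 : EA ≤ 1/4 := by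
    have h : 2/L ≤ 1/4 := by rw [div_le_div_iff₀ hL0 (by norm_num)]; linarith
    linarith
  have hEB2 : EB ≤ 1/2 := by
    have h : 4/L ≤ 1/2 := by rw [div_le_div_iff₀ hL0 (by norm_num)]; linarith
    linarith
  set d := lb - la with hd
  have hinvA : 1/A ≤ 2/S := by rw [div_le_div_iff₀ hA0 hS0]; linarith
  have hinvB : 1/B ≤ 2/S := by rw [div_le_div_iff₀ hB0 hS0]; linarith
  have habsd : |d| ≤ |A - B| * (2/S) := by
    have hBA : B - A ≤ |A - B| := by rw [abs_sub_comm]; exact le_abs_self _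
    have hAB' : A - B ≤ |A - B| := le_abs_self _
    have h2 : la - lb ≤ |A - B|/B := le_trans hla2 (by gcongr)
    have h2' : lb - la ≤ |A - B|/A := le_trans hla1 (by gcongr)
    have h3 : |A - B|/B ≤ |A - B| * (2/S) := by
      rw [div_eq_mul_inv, ← one_div]
      gcongr
    have h3' : |A - B|/A ≤ |A - B| * (2/S) := by
      rw [div_eq_mul_inv, ← one_div]
      gcongr
    rw [abs_le]
    constructor
    · rw [hd]; linarith
    · rw [hd]; linarith
  have habsd2 : |d| ≤ |A - B| * (1/2) := by
    have h25 : 2/S ≤ 1/2 := by rw [div_le_div_iff₀ hS0 (by norm_num)]; linarith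
    have h26 := mul_le_mul_of_nonneg_left h25 (abs_nonneg (A-B))
    calc |d| ≤ |A - B| * (2/S) := habsd
    _ ≤ |A - B| * (1/2) := by linarith
  have h24L : 2/L ≤ 4/L := by gcongr <;> norm_num
  have hEBA : |EB - EA| ≤ 4/L := by
    rw [abs_le]
    constructor <;> linarith
  have hEBA1 : |EB - EA| ≤ 1 := by
    rw [abs_le]
    constructor <;> linarith
  have hprod : |A - B| * (A + B) ≤ 2*|lx| + 2*|d| + 1 := by
    have e1 : |A - B| * (A + B) = |A^2 - B^2| := by
      rw [← abs_of_pos (show (0:ℝ) < A + B by linarith), ← abs_mul]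
      congr 1; ring
    have e2 : |A^2 - B^2| ≤ 2*|lx| + 2*|d| + 1 := by
      rw [hID, show 2*lx + 2*d + EB - EA = (2*lx + 2*d) + (EB - EA) by ring]
      have t1 := abs_add_le (2*lx + 2*d) (EB - EA)
      have t2 := abs_add_le (2*lx) (2*d)
      have t3 : |2*lx| = 2*|lx| := by rw [abs_mul, abs_two]
      have t4 : |2*d| = 2*|d| := by rw [abs_mul, abs_two]
      linarith
    linarith [e1 ▸ e2]
  have hABbd : |A - B| * (A + B) ≤ 4*|lx| + 2 := by
    have hX : (0:ℝ) ≤ |A - B| := abs_nonneg _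
    have hXA : |A - B| * 4 ≤ |A - B| * (A + B) :=
      mul_le_mul_of_nonneg_left hAB4 hX
    linarith
  have hfin : |A^2 - B^2 - 2*lx| ≤ (8*|lx| + 18)/L := by
    have e3 : A^2 - B^2 - 2*lx = 2*d + (EB - EA) := by rw [hd]; linarith [hID]
    rw [e3]
    have t1 := abs_add_le (2*d) (EB - EA)
    have t4 : |2*d| = 2*|d| := by rw [abs_mul, abs_two]
    -- 2|d| ≤ (8|lx|+4)/L
    have h5 : |A - B| ≤ (4*|lx| + 2)/(A + B) := by
      rw [le_div_iff₀ (by linarith : (0:ℝ) < A + B)]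
      exact hABbd
    have h6 : |d| ≤ ((4*|lx| + 2)/(A + B)) * (2/S) := by
      calc |d| ≤ |A - B| * (2/S) := habsd
      _ ≤ ((4*|lx| + 2)/(A + B)) * (2/S) := by gcongr
    have h7 : ((4*|lx| + 2)/(A + B)) * (2/S) = 2*(4*|lx| + 2)/((A+B)*S) := by
      field_simp
    have h8 : 2*(4*|lx| + 2)/((A+B)*S) ≤ 2*(4*|lx| + 2)/(S*S) := by
      gcongr <;> nlinarith [abs_nonneg lx]
    have h9 : 2*(4*|lx| + 2)/(S*S) = (4*|lx| + 2)/L := by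
      rw [show S*S = 2*L from by nlinarith [hS2]]
      rw [div_eq_div_iff (by positivity) (by positivity)]
      ring
    have hdL : |d| ≤ (4*|lx| + 2)/L := by
      rw [h7] at h6
      calc |d| ≤ 2*(4*|lx| + 2)/((A+B)*S) := h6
      _ ≤ 2*(4*|lx|+2)/(S*S) := h8
      _ = (4*|lx|+2)/L := h9
    have h10 : (8*|lx| + 8)/L ≤ (8*|lx| + 18)/L := by gcongr; linarith
    have hLne : L ≠ 0 := ne_of_gt hL0
    have h12 : 2*((4*|lx|+2)/L) + 4/L = (8*|lx| + 8)/L := by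
      field_simp
      ring
    calc |2*d + (EB - EA)| ≤ |2*d| + |EB - EA| := t1
    _ = 2*|d| + |EB - EA| := by rw [t4]
    _ ≤ 2*((4*|lx|+2)/L) + 4/L := add_le_add (by linarith [hdL]) hEBA
    _ = (8*|lx| + 8)/L := h12
    _ ≤ (8*|lx| + 18)/L := h10
  exact ⟨hfin, hSAB⟩

theorem main_core (q : ℝ → ℝ)
    (hT : ∀ s ∈ Ioo (0:ℝ) 1, TT (q s) = s * Real.sqrt (2*Real.pi))
    (x : ℝ) (hx : 0 < x) :
    Tendsto (fun s => (4 * Real.log (1/s) / Real.log (Real.log (1/s))) *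
        ((2 * Real.log (1/s)) ^ ((1:ℝ)/2) * (q s - q (x*s)) - Real.log x))
      (𝓝[>] (0:ℝ)) (𝓝 (Real.log x)) := by
  set lx := Real.log x with hlxdef
  have hmul : Tendsto (fun s : ℝ => x*s) (𝓝[>](0:ℝ)) (𝓝[>](0:ℝ)) := by
    apply tendsto_nhdsWithin_of_tendsto_nhds_of_eventually_within
    · have h1 : Tendsto (fun s : ℝ => x*s) (𝓝 0) (𝓝 (x*0)) :=
        (continuous_const.mul continuous_id).tendsto 0
      rw [mul_zero] at h1
      exact h1.mono_left nhdsWithin_le_nhds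
    · filter_upwards [self_mem_nhdsWithin] with s hs
      exact mul_pos hx hs
  have hLLs : ∀ᶠ s in 𝓝[>](0:ℝ), LL (x*s) = LL s - lx := by
    filter_upwards [self_mem_nhdsWithin] with s hs
    unfold LL
    rw [one_div, one_div, Real.log_inv, Real.log_inv, Real.log_mul hx.ne' (ne_of_gt hs)]
    ring
  have hu : Tendsto (fun s => q s / Real.sqrt (2*LL s)) (𝓝[>](0:ℝ)) (𝓝 1) := ratio hT
  have hP : Tendsto (fun s => Real.log (q s)/Real.log (LL s)) (𝓝[>](0:ℝ)) (𝓝 (1/2)) :=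
    ratio_log hT
  have hinvL : Tendsto (fun s => (LL s)⁻¹) (𝓝[>](0:ℝ)) (𝓝 0) :=
    tendsto_inv_atTop_zero.comp LL_top
  have hinvlogL : Tendsto (fun s => (Real.log (LL s))⁻¹) (𝓝[>](0:ℝ)) (𝓝 0) :=
    tendsto_inv_atTop_zero.comp logLL_top
  have hfrac : Tendsto (fun s => 1 - lx * (LL s)⁻¹) (𝓝[>](0:ℝ)) (𝓝 1) := by
    have h1 := (tendsto_const_nhds (x := (1:ℝ)) (f := 𝓝[>](0:ℝ))).sub (hinvL.const_mul lx)
    rw [show (1:ℝ) - lx * 0 = 1 by ring] at h1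
    exact h1
  have hBtop : Tendsto (fun s => q (x*s)) (𝓝[>](0:ℝ)) atTop := (q_top hT).comp hmul
  -- hv : B/sqrt(2 LL s) → 1
  have hvB : Tendsto (fun s => q (x*s) / Real.sqrt (2*LL (x*s))) (𝓝[>](0:ℝ)) (𝓝 1) :=
    (ratio hT).comp hmul
  have hvfact : Tendsto (fun s => Real.sqrt (1 - lx*(LL s)⁻¹)) (𝓝[>](0:ℝ)) (𝓝 1) := by
    have h1 := (Real.continuous_sqrt.tendsto 1).comp hfrac
    rwa [Real.sqrt_one] at h1
  have hv : Tendsto (fun s => q (x*s) / Real.sqrt (2*LL s)) (𝓝[>](0:ℝ)) (𝓝 1) := by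
    have hcomb := hvB.mul hvfact
    rw [mul_one] at hcomb
    apply hcomb.congr'
    filter_upwards [hLLs, LL_top.eventually (eventually_gt_atTop (|lx|+1)),
      hBtop.eventually (eventually_gt_atTop (0:ℝ))] with s h1 h2 h3
    have hL0 : 0 < LL s := lt_of_le_of_lt (by positivity) h2
    have hLlx0 : 0 < LL s - lx := by
      have := le_abs_self lx
      linarith
    rw [h1]
    rw [show (1 : ℝ) - lx*(LL s)⁻¹ = (LL s - lx)/(LL s) by field_simp]
    rw [Real.sqrt_div hLlx0.le, Real.sqrt_mul (by norm_num : (0:ℝ) ≤ 2),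
      Real.sqrt_mul (by norm_num : (0:ℝ) ≤ 2)]
    have e1 : Real.sqrt (LL s - lx) ≠ 0 := ne_of_gt (Real.sqrt_pos.2 hLlx0)
    have e2 : Real.sqrt (LL s) ≠ 0 := ne_of_gt (Real.sqrt_pos.2 hL0)
    have e3 : Real.sqrt 2 ≠ 0 := by positivity
    field_simp
  -- hQ : log B/log LL → 1/2
  have hQB : Tendsto (fun s => Real.log (q (x*s)) / Real.log (LL (x*s))) (𝓝[>](0:ℝ))
      (𝓝 (1/2)) := (ratio_log hT).comp hmul
  have hshift : Tendsto (fun s => Real.log (LL s - lx)/Real.log (LL s)) (𝓝[>](0:ℝ)) (𝓝 1) := by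
    have hsmall : Tendsto (fun s => Real.log (1 - lx*(LL s)⁻¹)) (𝓝[>](0:ℝ)) (𝓝 0) := by
      have h1 := (Real.continuousAt_log (by norm_num : (1:ℝ) ≠ 0)).tendsto.comp hfrac
      rwa [Real.log_one] at h1
    have hcomb := (hsmall.mul hinvlogL).const_add (1:ℝ)
    rw [show (1:ℝ) + 0*0 = 1 by ring] at hcomb
    apply hcomb.congr'
    filter_upwards [LL_top.eventually (eventually_gt_atTop (|lx|+1)),
      logLL_top.eventually (eventually_ge_atTop (1:ℝ))] with s h2 h4
    have hL0 : 0 < LL s := lt_of_le_of_lt (by positivity) h2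
    have hLlx0 : 0 < LL s - lx := by
      have := le_abs_self lx
      linarith
    have hfr0 : 0 < 1 - lx*(LL s)⁻¹ := by
      have e : 1 - lx*(LL s)⁻¹ = (LL s - lx)/(LL s) := by field_simp
      rw [e]; positivity
    have hlogLne : Real.log (LL s) ≠ 0 := by linarith
    rw [show LL s - lx = LL s * (1 - lx*(LL s)⁻¹) by field_simp,
      Real.log_mul (ne_of_gt hL0) (ne_of_gt hfr0), add_div, div_self hlogLne,
      div_eq_mul_inv, add_comm]
  have hQ : Tendsto (fun s => Real.log (q (x*s))/Real.log (LL s)) (𝓝[>](0:ℝ)) (𝓝 (1/2)) := by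
    have hcomb := hQB.mul hshift
    rw [mul_one] at hcomb
    apply hcomb.congr'
    filter_upwards [hLLs, LL_top.eventually (eventually_gt_atTop (|lx|+2)),
      logLL_top.eventually (eventually_ge_atTop (1:ℝ))] with s h1 h2 h4
    have hLlx2 : 2 ≤ LL s - lx := by
      have := le_abs_self lx
      linarith
    have hlog2 : 0 < Real.log (LL s - lx) := Real.log_pos (by linarith)
    have hlogLne : Real.log (LL s) ≠ 0 := by linarith
    rw [h1]
    field_simp
  -- error terms tendsto 0
  have hA2top : Tendsto (fun s => (q s)^2) (𝓝[>](0:ℝ)) atTop :=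
    (tendsto_pow_atTop (two_ne_zero)).comp (q_top hT)
  have hB2top : Tendsto (fun s => (q (x*s))^2) (𝓝[>](0:ℝ)) atTop :=
    (tendsto_pow_atTop (two_ne_zero)).comp hBtop
  have h2A : Tendsto (fun s => 2/(q s)^2) (𝓝[>](0:ℝ)) (𝓝 0) := by
    have h1 := (tendsto_inv_atTop_zero.comp hA2top).const_mul (2:ℝ)
    rw [mul_zero] at h1
    exact h1.congr (fun s => by simp [Function.comp, div_eq_mul_inv])
  have h2B : Tendsto (fun s => 2/(q (x*s))^2) (𝓝[>](0:ℝ)) (𝓝 0) := by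
    have h1 := (tendsto_inv_atTop_zero.comp hB2top).const_mul (2:ℝ)
    rw [mul_zero] at h1
    exact h1.congr (fun s => by simp [Function.comp, div_eq_mul_inv])
  have hER0 : Tendsto (fun s => ER q s) (𝓝[>](0:ℝ)) (𝓝 0) := by
    apply tendsto_of_tendsto_of_tendsto_of_le_of_le' tendsto_const_nhds h2A
    · filter_upwards [er_bounds hT] with s h; exact h.1
    · filter_upwards [er_bounds hT] with s h; exact h.2
  have hEB_ev : ∀ᶠ s in 𝓝[>](0:ℝ),
      ER q (x*s) = 2*(LL s - lx) - (q (x*s))^2 - 2*Real.log (q (x*s)) - Real.log (2*Real.pi) := by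
    filter_upwards [hLLs] with s h1
    unfold ER
    rw [h1]
  have hEB0 : Tendsto (fun s =>
      2*(LL s - lx) - (q (x*s))^2 - 2*Real.log (q (x*s)) - Real.log (2*Real.pi))
      (𝓝[>](0:ℝ)) (𝓝 0) := by
    apply Tendsto.congr' hEB_ev (hER0.comp hmul)
  -- numerators over log LL
  have hN1 : Tendsto (fun s => (2*LL s - (q s)^2)/Real.log (LL s)) (𝓝[>](0:ℝ)) (𝓝 1) := by
    have h1 := ((hP.const_mul 2).add (hinvlogL.const_mul (Real.log (2*Real.pi)))).add
      (hER0.mul hinvlogL)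
    rw [show (2*(1/2:ℝ) + Real.log (2*Real.pi)*0 + 0*0) = 1 by ring] at h1
    apply h1.congr
    intro s
    unfold ER
    ring
  have hN2 : Tendsto (fun s => (2*LL s - (q (x*s))^2)/Real.log (LL s)) (𝓝[>](0:ℝ)) (𝓝 1) := by
    have h1 := (((hinvlogL.const_mul (2*lx)).add (hQ.const_mul 2)).add
      (hinvlogL.const_mul (Real.log (2*Real.pi)))).add
      (hEB0.mul hinvlogL)
    rw [show ((2*lx*0 + 2*(1/2:ℝ)) + Real.log (2*Real.pi)*0 + 0*0) = 1 by ring] at h1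
    apply h1.congr
    intro s
    ring
  -- denominators
  have hQ1 : Tendsto (fun s => 2/((1 + q s/Real.sqrt (2*LL s)) *
      (q s/Real.sqrt (2*LL s) + q (x*s)/Real.sqrt (2*LL s)))) (𝓝[>](0:ℝ)) (𝓝 (1/2)) := by
    have hden := (((tendsto_const_nhds (x := (1:ℝ))).add hu).mul (hu.add hv))
    have h1 := (tendsto_const_nhds (x := (2:ℝ))).div hden (by norm_num)
    rw [show (2:ℝ)/((1+1)*(1+1)) = 1/2 by norm_num] at h1
    exact h1
  have hQ2 : Tendsto (fun s => 2/((1 + q (x*s)/Real.sqrt (2*LL s)) *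
      (q s/Real.sqrt (2*LL s) + q (x*s)/Real.sqrt (2*LL s)))) (𝓝[>](0:ℝ)) (𝓝 (1/2)) := by
    have hden := (((tendsto_const_nhds (x := (1:ℝ))).add hv).mul (hu.add hv))
    have h1 := (tendsto_const_nhds (x := (2:ℝ))).div hden (by norm_num)
    rw [show (2:ℝ)/((1+1)*(1+1)) = 1/2 by norm_num] at h1
    exact h1
  have hM1 : Tendsto (fun s => (2*LL s - (q s)^2)/Real.log (LL s) *
      (2/((1 + q s/Real.sqrt (2*LL s)) *
      (q s/Real.sqrt (2*LL s) + q (x*s)/Real.sqrt (2*LL s))))) (𝓝[>](0:ℝ)) (𝓝 (1/2)) := by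
    have h1 := hN1.mul hQ1
    rwa [one_mul] at h1
  have hM2 : Tendsto (fun s => (2*LL s - (q (x*s))^2)/Real.log (LL s) *
      (2/((1 + q (x*s)/Real.sqrt (2*LL s)) *
      (q s/Real.sqrt (2*LL s) + q (x*s)/Real.sqrt (2*LL s))))) (𝓝[>](0:ℝ)) (𝓝 (1/2)) := by
    have h1 := hN2.mul hQ2
    rwa [one_mul] at h1
  -- the eventual pointwise bundle
  have hg0 : Tendsto (fun s => (32*|lx| + 72) * (Real.log (LL s))⁻¹) (𝓝[>](0:ℝ)) (𝓝 0) := by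
    have h1 := hinvlogL.const_mul (32*|lx| + 72)
    rwa [mul_zero] at h1
  have hbundle : ∀ᶠ s in 𝓝[>](0:ℝ),
      |(q s)^2 - (q (x*s))^2 - 2*lx| ≤ (8*|lx| + 18)/(LL s) ∧
      Real.sqrt (2*LL s) ≤ q s + q (x*s) ∧ 1 ≤ q s ∧ 1 ≤ q (x*s) ∧ 8 ≤ LL s ∧
      1 ≤ Real.log (LL s) := by
    filter_upwards [er_bounds hT, hmul.eventually (er_bounds hT), hLLs,
      (q_top hT).eventually (eventually_ge_atTop (1:ℝ)),
      hBtop.eventually (eventually_ge_atTop (1:ℝ)),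
      LL_top.eventually (eventually_ge_atTop (max 8 (2*|lx| + 2))),
      logLL_top.eventually (eventually_ge_atTop (1:ℝ)),
      LL_le_sq hT, hmul.eventually (LL_le_sq hT)] with s hEA hEB hL1 hA1 hB1 hL8 hlgL hLA hLB
    have hL8' : 8 ≤ LL s := le_trans (le_max_left _ _) hL8
    have hLlx : 2*|lx| + 2 ≤ LL s := le_trans (le_max_right _ _) hL8
    have hA0 : (0:ℝ) < q s := lt_of_lt_of_le one_pos hA1
    have hB0 : (0:ℝ) < q (x*s) := lt_of_lt_of_le one_pos hB1
    rw [hL1] at hLB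
    have hBL : LL s/2 ≤ (q (x*s))^2 := by
      have h1 := le_abs_self lx
      linarith [hLB]
    have hID : (q s)^2 - (q (x*s))^2 = 2*lx +
        2*(Real.log (q (x*s)) - Real.log (q s)) + ER q (x*s) - ER q s := by
      unfold ER
      rw [hL1]
      ring
    have hla1 : Real.log (q (x*s)) - Real.log (q s) ≤ (q (x*s) - q s)/(q s) := by
      have h1 : Real.log (q (x*s)) - Real.log (q s) = Real.log (q (x*s)/q s) :=
        (Real.log_div (ne_of_gt hB0) (ne_of_gt hA0)).symm
      have h2 := Real.log_le_sub_one_of_pos (div_pos hB0 hA0)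
      rw [h1, div_sub_one (ne_of_gt hA0)] at *
      linarith [h2]
    have hla2 : Real.log (q s) - Real.log (q (x*s)) ≤ (q s - q (x*s))/(q (x*s)) := by
      have h1 : Real.log (q s) - Real.log (q (x*s)) = Real.log (q s/q (x*s)) :=
        (Real.log_div (ne_of_gt hA0) (ne_of_gt hB0)).symm
      have h2 := Real.log_le_sub_one_of_pos (div_pos hA0 hB0)
      rw [h1, div_sub_one (ne_of_gt hB0)] at *
      linarith [h2]
    have := residue_bound (q s) (q (x*s)) (LL s) lx (Real.log (q s)) (Real.log (q (x*s)))
      (ER q s) (ER q (x*s)) hA1 hB1 hL8' hLA hBL hEA.1 hEA.2 hEB.1 hEB.2 hID hla1 hla2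
    exact ⟨this.1, this.2, hA1, hB1, hL8', hlgL⟩
  -- T34 term tends to 0
  have hT34 : Tendsto (fun s => (4*LL s/Real.log (LL s)) * Real.sqrt (2*LL s) *
      (((q s)^2 - (q (x*s))^2 - 2*lx)/(q s + q (x*s)))) (𝓝[>](0:ℝ)) (𝓝 0) := by
    apply squeeze_zero_norm' ?_ hg0
    filter_upwards [hbundle] with s hb
    obtain ⟨hd, hSAB, hA1, hB1, hL8, hlgL⟩ := hb
    have hL0 : (0:ℝ) < LL s := by linarith
    have hlgL0 : (0:ℝ) < Real.log (LL s) := by linarith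
    have hA0 : (0:ℝ) < q s := by linarith
    have hB0 : (0:ℝ) < q (x*s) := by linarith
    have hAB0 : (0:ℝ) < q s + q (x*s) := by linarith
    have hS0 : 0 < Real.sqrt (2*LL s) := Real.sqrt_pos.2 (by positivity)
    rw [Real.norm_eq_abs, abs_mul, abs_mul, abs_div, abs_div,
      abs_of_pos (show (0:ℝ) < 4*LL s by linarith), abs_of_pos hlgL0,
      abs_of_pos hS0, abs_of_pos hAB0]
    calc (4*LL s/Real.log (LL s)) * Real.sqrt (2*LL s) *
        (|(q s)^2 - (q (x*s))^2 - 2*lx|/(q s + q (x*s)))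
        ≤ (4*LL s/Real.log (LL s)) * Real.sqrt (2*LL s) *
          (((8*|lx| + 18)/(LL s))/(q s + q (x*s))) := by gcongr
      _ = (4*(8*|lx| + 18)/Real.log (LL s)) * (Real.sqrt (2*LL s)/(q s + q (x*s))) := by
          field_simp
      _ ≤ (4*(8*|lx| + 18)/Real.log (LL s)) * 1 := by
          have hfac : (0:ℝ) ≤ 4*(8*|lx| + 18)/Real.log (LL s) := by positivity
          exact mul_le_mul_of_nonneg_left ((div_le_one hAB0).2 hSAB) hfac
      _ = (32*|lx| + 72) * (Real.log (LL s))⁻¹ := by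
          rw [mul_one, div_eq_mul_inv]
          ring
  -- final assembly
  have hsum := ((hM1.const_mul lx).add (hM2.const_mul lx)).add hT34
  rw [show lx*(1/2) + lx*(1/2) + 0 = lx by ring] at hsum
  apply hsum.congr'
  filter_upwards [hbundle] with s hb
  obtain ⟨hd, hSAB, hA1, hB1, hL8, hlgL⟩ := hb
  have hL0 : (0:ℝ) < LL s := by linarith
  have hA0 : (0:ℝ) < q s := by linarith
  have hB0 : (0:ℝ) < q (x*s) := by linarith
  have hS2 : (Real.sqrt (2*LL s))^2 = 2*LL s := Real.sq_sqrt (by positivity)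
  have hS0 : 0 < Real.sqrt (2*LL s) := Real.sqrt_pos.2 (by positivity)
  have hlgne : Real.log (LL s) ≠ 0 := by linarith
  have halg := algF (LL s) (Real.log (LL s)) (Real.sqrt (2*LL s)) (q s) (q (x*s)) lx
    hS2 hS0 hA0 hB0 hlgne
  show _ = (4 * Real.log (1/s) / Real.log (Real.log (1/s))) *
      ((2 * Real.log (1/s)) ^ ((1:ℝ)/2) * (q s - q (x*s)) - lx)
  rw [show Real.log (1/s) = LL s from rfl,
    show (2*LL s)^((1:ℝ)/2) = Real.sqrt (2*LL s) from (Real.sqrt_eq_rpow _).symm]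
  exact halg.symm

end NSO

open Filter Topology Set

/-- Second order condition for the standard normal quantile function. -/
theorem normal_second_order
    (Φ : ℝ → ℝ)
    (hΦ : ∀ y : ℝ, Φ y = (2 * Real.pi) ^ (-(1/2) : ℝ) * ∫ t in Set.Iic y, Real.exp (-t ^ 2 / 2))
    (q : ℝ → ℝ)
    (hq : ∀ s ∈ Set.Ioo (0:ℝ) 1, Φ (q s) = 1 - s)
    (x : ℝ) (hx : 0 < x) :
    Tendsto (fun s => (4 * Real.log (1 / s) / Real.log (Real.log (1 / s))) *
        ((2 * Real.log (1 / s)) ^ ((1:ℝ)/2) * (q s - q (x * s)) - Real.log x))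
      (𝓝[>] 0) (𝓝 (Real.log x)) := by
  have hc : (2*Real.pi) ^ (-(1/2) : ℝ) * Real.sqrt (2*Real.pi) = 1 := by
    rw [Real.sqrt_eq_rpow, ← Real.rpow_add (by positivity)]
    norm_num
  have hT : ∀ s ∈ Set.Ioo (0:ℝ) 1, NSO.TT (q s) = s * Real.sqrt (2*Real.pi) := by
    intro s hs
    have h1 := hq s hs
    rw [hΦ, NSO.integral_Iic_gg] at h1
    have h2 : (2*Real.pi) ^ (-(1/2) : ℝ) * NSO.TT (q s) = s := by linear_combination hc - h1
    linear_combination Real.sqrt (2*Real.pi) * h2 - NSO.TT (q s) * hc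
  exact NSO.main_core q hT x hx
end
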